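/- arXiv:2509.17415 — 12 statements merged into one kernel-verified Lean document; each statement's English description precedes it below -/
import Mathlib

section
/- Let F ⊆ ℝ² be a nonempty compact set. Suppose 0 < a < 1/√2 and θ₀, θ₁ ∈ ℝ are such that F ⊆ H(a,θ₀), F ⊆ H(a,θ₁), and a is minimal among enclosing horocycles, i.e. for all a' with 0 < a' < 1 and all θ' ∈ ℝ, if F ⊆ H(a',θ') then a ≤ a'. Then H(a,θ₀) = H(a,θ₁) (the minimal enclosing horocycle is unique). -/
noncomputable def planeRot (θ : ℝ) (p : ℝ × ℝ) : ℝ × ℝ :=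
  (p.1 * Real.cos θ - p.2 * Real.sin θ, p.1 * Real.sin θ + p.2 * Real.cos θ)

noncomputable def horoRegion (a θ : ℝ) : Set (ℝ × ℝ) :=
  planeRot θ '' {p | a ^ 2 * p.1 ^ 2 + (p.2 - (1 - a ^ 2)) ^ 2 ≤ a ^ 4}

lemma mem_horoRegion_iff {a θ : ℝ} {p : ℝ × ℝ} :
    p ∈ horoRegion a θ ↔
      (1 - a ^ 2) * (1 - (p.1 * (-Real.sin θ) + p.2 * Real.cos θ)) ^ 2
        ≤ a ^ 2 * (1 - p.1 ^ 2 - p.2 ^ 2) := by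
  have pyth := Real.sin_sq_add_cos_sq θ
  constructor
  · rintro ⟨q, hq, rfl⟩
    simp only [Set.mem_setOf_eq] at hq
    simp only [planeRot]
    have E : (1 - a ^ 2) * (1 - ((q.1 * Real.cos θ - q.2 * Real.sin θ) * (-Real.sin θ)
          + (q.1 * Real.sin θ + q.2 * Real.cos θ) * Real.cos θ)) ^ 2
        - a ^ 2 * (1 - (q.1 * Real.cos θ - q.2 * Real.sin θ) ^ 2
          - (q.1 * Real.sin θ + q.2 * Real.cos θ) ^ 2)
        = a ^ 2 * q.1 ^ 2 + (q.2 - (1 - a ^ 2)) ^ 2 - a ^ 4 := by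
      linear_combination ((1 - a ^ 2) * (q.2 ^ 2 * (Real.sin θ ^ 2 + Real.cos θ ^ 2 + 1)
        - 2 * q.2) + a ^ 2 * (q.1 ^ 2 + q.2 ^ 2)) * pyth
    linarith [hq, E]
  · intro h
    refine ⟨planeRot (-θ) p, ?_, ?_⟩
    · simp only [planeRot, Set.mem_setOf_eq, Real.sin_neg, Real.cos_neg]
      have E : a ^ 2 * (p.1 * Real.cos θ - p.2 * -Real.sin θ) ^ 2
          + ((p.1 * -Real.sin θ + p.2 * Real.cos θ) - (1 - a ^ 2)) ^ 2 - a ^ 4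
          = (1 - a ^ 2) * (1 - (p.1 * (-Real.sin θ) + p.2 * Real.cos θ)) ^ 2
            - a ^ 2 * (1 - p.1 ^ 2 - p.2 ^ 2) := by
        linear_combination (a ^ 2 * (p.1 ^ 2 + p.2 ^ 2)) * pyth
      linarith [h, E]
    · simp only [planeRot, Real.sin_neg, Real.cos_neg]
      apply Prod.ext <;> simp only []
      · linear_combination p.1 * pyth
      · linear_combination p.2 * pyth

lemma horo_key {k m x A B P : ℝ} (hm0 : 0 < m)
    (hx0 : 0 ≤ x) (hx1 : x ≤ 1) (hA : A ≤ k * x) (hB : B ≤ k * x)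
    (hk0 : 0 ≤ k)
    (hP : 0 ≤ P) (hid : 2 * m * P = A + B - 2 * (1 - m)) (hm1 : m < 1) :
    m ^ 2 * P ^ 2 ≤ (k - (1 - m)) ^ 2 * x ^ 2 := by
  set e := 1 - m with he
  have he0 : 0 < e := by rw [he]; linarith
  have h1 : m * P ≤ k * x - e := by linarith
  have h2 : e ≤ k * x := by nlinarith [mul_nonneg hm0.le hP]
  have h3 : (m * P) ^ 2 ≤ (k * x - e) ^ 2 := by
    nlinarith [mul_nonneg hm0.le hP]
  have h4 : (k * x - e) ^ 2 ≤ (k - e) ^ 2 * x ^ 2 := by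
    nlinarith [mul_nonneg (mul_nonneg he0.le (sub_nonneg.2 hx1)) (sub_nonneg.2 h2),
      mul_nonneg (mul_nonneg (mul_nonneg he0.le (sub_nonneg.2 hx1)) hx0)
        (by nlinarith : (0:ℝ) ≤ k - e)]
  nlinarith [h3, h4]

lemma point_bound {a k p₁ p₂ u₁ u₂ : ℝ} (ha0 : 0 < a) (ha1 : a ^ 2 < 1)
    (hk0 : 0 ≤ k) (hk2 : k ^ 2 * (1 - a ^ 2) = a ^ 2)
    (hu : u₁ ^ 2 + u₂ ^ 2 = 1)
    (h : (1 - a ^ 2) * (1 - (p₁ * u₁ + p₂ * u₂)) ^ 2 ≤ a ^ 2 * (1 - p₁ ^ 2 - p₂ ^ 2)) :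
    0 ≤ 1 - (p₁ * u₁ + p₂ * u₂) ∧
      (1 - (p₁ * u₁ + p₂ * u₂) ≤ k * Real.sqrt (1 - p₁ ^ 2 - p₂ ^ 2) ∧
        0 ≤ 1 - p₁ ^ 2 - p₂ ^ 2) := by
  have h1a2 : 0 < 1 - a ^ 2 := by linarith
  have hD0 : 0 ≤ 1 - p₁ ^ 2 - p₂ ^ 2 := by
    nlinarith [mul_nonneg h1a2.le (sq_nonneg (1 - (p₁ * u₁ + p₂ * u₂))), pow_pos ha0 2]
  have hA0 : 0 ≤ 1 - (p₁ * u₁ + p₂ * u₂) := by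
    nlinarith [sq_nonneg (p₁ - u₁), sq_nonneg (p₂ - u₂)]
  refine ⟨hA0, ?_, hD0⟩
  have hx2 : (Real.sqrt (1 - p₁ ^ 2 - p₂ ^ 2)) ^ 2 = 1 - p₁ ^ 2 - p₂ ^ 2 :=
    Real.sq_sqrt hD0
  have hA2 : (1 - (p₁ * u₁ + p₂ * u₂)) ^ 2 ≤ k ^ 2 * (1 - p₁ ^ 2 - p₂ ^ 2) := by
    nlinarith [h, hk2, h1a2]
  have hkx0 : 0 ≤ k * Real.sqrt (1 - p₁ ^ 2 - p₂ ^ 2) :=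
    mul_nonneg hk0 (Real.sqrt_nonneg _)
  have := Real.sqrt_le_sqrt (show (1 - (p₁ * u₁ + p₂ * u₂)) ^ 2
      ≤ (k * Real.sqrt (1 - p₁ ^ 2 - p₂ ^ 2)) ^ 2 by nlinarith)
  rwa [Real.sqrt_sq hA0, Real.sqrt_sq hkx0] at this


lemma aux_sum_sq_zero {x y : ℝ} (h : x ^ 2 + y ^ 2 ≤ 0) : x = 0 ∧ y = 0 := by
  constructor <;> nlinarith [sq_nonneg x, sq_nonneg y]

lemma aux_k1 {a k : ℝ} (hk0 : 0 < k) (h : k ^ 2 * (1 - a ^ 2) = a ^ 2)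
    (ha2 : a ^ 2 < 1 / 2) : k < 1 := by nlinarith

lemma aux_ip_lt_one {u₁ u₂ v₁ v₂ : ℝ} (hu : u₁ ^ 2 + u₂ ^ 2 = 1)
    (hv : v₁ ^ 2 + v₂ ^ 2 = 1) (h : 1 ≤ u₁ * v₁ + u₂ * v₂) : u₁ = v₁ ∧ u₂ = v₂ := by
  constructor <;> nlinarith [sq_nonneg (u₁ - v₁), sq_nonneg (u₂ - v₂)]

lemma aux_ip_ge {u₁ u₂ v₁ v₂ : ℝ} (hu : u₁ ^ 2 + u₂ ^ 2 = 1)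
    (hv : v₁ ^ 2 + v₂ ^ 2 = 1) : -1 ≤ u₁ * v₁ + u₂ * v₂ := by
  nlinarith [sq_nonneg (u₁ + v₁), sq_nonneg (u₂ + v₂)]

lemma aux_P {p₁ p₂ w₁ w₂ : ℝ} (hD : 0 ≤ 1 - p₁ ^ 2 - p₂ ^ 2)
    (hw : w₁ ^ 2 + w₂ ^ 2 = 1) : 0 ≤ 1 - (p₁ * w₁ + p₂ * w₂) := by
  nlinarith [sq_nonneg (p₁ - w₁), sq_nonneg (p₂ - w₂)]

lemma aux_ek {k m x A B P : ℝ} (hm0 : 0 < m) (hk0 : 0 < k) (hP : 0 ≤ P)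
    (hA : A ≤ k * x) (hB : B ≤ k * x) (hid : 2 * m * P = A + B - 2 * (1 - m))
    (hx : x < 1) : 1 - m < k := by
  nlinarith [mul_nonneg hm0.le hP, mul_pos hk0 (by linarith : (0:ℝ) < 1 - x)]

lemma aux_km {k m : ℝ} (hk1 : k < 1) (hm1 : m < 1) : k - (1 - m) < k * m := by
  nlinarith [mul_pos (by linarith : (0:ℝ) < 1 - k) (by linarith : (0:ℝ) < 1 - m)]

lemma aux_lt_one_of_sq {x : ℝ} (h0 : 0 < x) (h : x ^ 2 < 1) : x < 1 := by nlinarith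

lemma aux_lt_of_sq {x y : ℝ} (hx : 0 ≤ x) (hy : 0 ≤ y) (h : x ^ 2 < y ^ 2) :
    x < y := by nlinarith

lemma aux_lt2 {a k m : ℝ} (h1a2 : 0 < 1 - a ^ 2) (hk2 : k ^ 2 * (1 - a ^ 2) = a ^ 2)
    (hke : 0 < k - (1 - m)) (hkm : k - (1 - m) < k * m) :
    (k - (1 - m)) ^ 2 < a ^ 2 * (m ^ 2 + (k - (1 - m)) ^ 2) := by
  have hsqlt : (k - (1 - m)) ^ 2 < (k * m) ^ 2 := by nlinarith
  have h3 : (1 - a ^ 2) * (k * m) ^ 2 = a ^ 2 * m ^ 2 := by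
    linear_combination m ^ 2 * hk2
  nlinarith [mul_pos h1a2 (sub_pos.2 hsqlt)]

set_option maxHeartbeats 2000000 in
/-- A compact set that can be enclosed by a horocycle of size `a < 1/√2`, where `a` is
minimal among the sizes of all enclosing horocycles, has a unique minimal enclosing
horocycle. -/
theorem minimal_enclosing_horocycle_unique
    (F : Set (ℝ × ℝ)) (hne : F.Nonempty) (hF : IsCompact F)
    (a : ℝ) (ha0 : 0 < a) (ha : a < 1 / Real.sqrt 2)
    (θ₀ θ₁ : ℝ)
    (h₀ : F ⊆ horoRegion a θ₀) (h₁ : F ⊆ horoRegion a θ₁)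
    (hmin : ∀ a' θ' : ℝ, 0 < a' → a' < 1 → F ⊆ horoRegion a' θ' → a ≤ a') :
    horoRegion a θ₀ = horoRegion a θ₁ := by
  -- basic bounds on a
  have hs2 : (0:ℝ) < Real.sqrt 2 := Real.sqrt_pos.2 (by norm_num)
  have hsq2 : (Real.sqrt 2) ^ 2 = 2 := Real.sq_sqrt (by norm_num)
  have ha' : a * Real.sqrt 2 < 1 := by
    have := (lt_div_iff₀ hs2).1 ha
    linarith
  have ha2 : a ^ 2 < 1 / 2 := by
    nlinarith [mul_nonneg ha0.le hs2.le]
  have ha1 : a ^ 2 < 1 := by linarith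
  have h1a2 : 0 < 1 - a ^ 2 := by linarith
  -- k = a / sqrt(1-a²), so k² = a²/(1-a²) and 0 < k < 1
  set k := a / Real.sqrt (1 - a ^ 2) with hk
  have hsa : Real.sqrt (1 - a ^ 2) > 0 := Real.sqrt_pos.2 h1a2
  have hk0 : 0 < k := div_pos ha0 hsa
  have hk2 : k ^ 2 * (1 - a ^ 2) = a ^ 2 := by
    rw [hk, div_pow, Real.sq_sqrt h1a2.le]
    field_simp
  have hk1 : k < 1 := aux_k1 hk0 hk2 ha2
  -- the tangent direction vectors
  set u₁ := -Real.sin θ₀ with hu₁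
  set u₂ := Real.cos θ₀ with hu₂
  set v₁ := -Real.sin θ₁ with hv₁
  set v₂ := Real.cos θ₁ with hv₂
  have hu : u₁ ^ 2 + u₂ ^ 2 = 1 := by
    rw [hu₁, hu₂, neg_pow]; simpa using Real.sin_sq_add_cos_sq θ₀
  have hv : v₁ ^ 2 + v₂ ^ 2 = 1 := by
    rw [hv₁, hv₂, neg_pow]; simpa using Real.sin_sq_add_cos_sq θ₁
  by_cases huv : u₁ = v₁ ∧ u₂ = v₂
  · -- same tangent point: the regions are equal
    have hsin : Real.sin θ₀ = Real.sin θ₁ := by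
      have := huv.1; rw [hu₁, hv₁] at this; linarith
    have hcos : Real.cos θ₀ = Real.cos θ₁ := huv.2
    ext p
    rw [mem_horoRegion_iff, mem_horoRegion_iff, hsin, hcos]
  · exfalso
    -- per-point facts
    have pt : ∀ p ∈ F, 0 ≤ 1 - (p.1 * u₁ + p.2 * u₂) ∧
        1 - (p.1 * u₁ + p.2 * u₂) ≤ k * Real.sqrt (1 - p.1 ^ 2 - p.2 ^ 2) ∧
        0 ≤ 1 - (p.1 * v₁ + p.2 * v₂) ∧
        1 - (p.1 * v₁ + p.2 * v₂) ≤ k * Real.sqrt (1 - p.1 ^ 2 - p.2 ^ 2) ∧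
        0 ≤ 1 - p.1 ^ 2 - p.2 ^ 2 ∧ Real.sqrt (1 - p.1 ^ 2 - p.2 ^ 2) ≤ 1 := by
      intro p hp
      have H0 := mem_horoRegion_iff.1 (h₀ hp)
      have H1 := mem_horoRegion_iff.1 (h₁ hp)
      rw [← hu₁, ← hu₂] at H0
      rw [← hv₁, ← hv₂] at H1
      obtain ⟨hA0, hAx, hD0⟩ := point_bound ha0 ha1 hk0.le hk2 hu H0
      obtain ⟨hB0, hBx, -⟩ := point_bound ha0 ha1 hk0.le hk2 hv H1
      have hx1 : Real.sqrt (1 - p.1 ^ 2 - p.2 ^ 2) ≤ 1 :=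
        Real.sqrt_le_one.2 (by nlinarith [sq_nonneg p.1, sq_nonneg p.2])
      exact ⟨hA0, hAx, hB0, hBx, hD0, hx1⟩
    -- inner product of the two directions
    set S := u₁ * v₁ + u₂ * v₂ with hS
    have hS1 : S < 1 := by
      by_contra hc
      push_neg at hc
      rw [hS] at hc
      exact huv (aux_ip_lt_one hu hv hc)
    have hSm1 : -1 ≤ S := by rw [hS]; exact aux_ip_ge hu hv
    have hsum : (u₁ + v₁) ^ 2 + (u₂ + v₂) ^ 2 = 2 + 2 * S := by
      rw [hS]; linear_combination hu + hv
    set m := Real.sqrt ((1 + S) / 2) with hm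
    have hm0' : 0 ≤ m := Real.sqrt_nonneg _
    have hm2 : m ^ 2 = (1 + S) / 2 := Real.sq_sqrt (by linarith)
    have hm1 : m < 1 := by
      have h := Real.sqrt_lt_sqrt (show (0:ℝ) ≤ (1 + S) / 2 by linarith)
        (show (1 + S) / 2 < 1 by linarith)
      rwa [Real.sqrt_one, ← hm] at h
    obtain ⟨p₀, hp₀⟩ := hne
    by_cases hmz : m = 0
    · -- antipodal tangent points: contradiction using one point of F
      have hz : (1 + S) / 2 ≤ 0 := Real.sqrt_eq_zero'.1 (hm ▸ hmz)
      have hS2 : S = -1 := by linarith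
      have hss : (u₁ + v₁) ^ 2 + (u₂ + v₂) ^ 2 ≤ 0 := by rw [hsum]; linarith
      obtain ⟨huv1, huv2⟩ := aux_sum_sq_zero hss
      obtain ⟨hA0, hAx, hB0, hBx, hD0, hx1⟩ := pt p₀ hp₀
      have hAB : (1 - (p₀.1 * u₁ + p₀.2 * u₂)) + (1 - (p₀.1 * v₁ + p₀.2 * v₂)) = 2 := by
        linear_combination (-p₀.1) * huv1 + (-p₀.2) * huv2
      have hxx : k * Real.sqrt (1 - p₀.1 ^ 2 - p₀.2 ^ 2) ≤ k :=
        mul_le_of_le_one_right hk0.le hx1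
      linarith
    · -- distinct, non-antipodal tangent points
      have hm0 : 0 < m := lt_of_le_of_ne hm0' (Ne.symm hmz)
      have h1S : 0 < 1 + S := by linarith [hm2, pow_pos hm0 2]
      set w₁ := (u₁ + v₁) / (2 * m) with hw₁
      set w₂ := (u₂ + v₂) / (2 * m) with hw₂
      have h2m : (2 * m) ^ 2 = 2 * (1 + S) := by rw [mul_pow, hm2]; ring
      have hw : w₁ ^ 2 + w₂ ^ 2 = 1 := by
        rw [hw₁, hw₂, div_pow, div_pow, ← add_div, h2m, hsum,
          div_eq_one_iff_eq (by linarith)]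
        ring
      have hidp : ∀ p : ℝ × ℝ, 2 * m * (1 - (p.1 * w₁ + p.2 * w₂)) =
          (1 - (p.1 * u₁ + p.2 * u₂)) + (1 - (p.1 * v₁ + p.2 * v₂)) - 2 * (1 - m) := by
        intro p
        rw [hw₁, hw₂]
        field_simp
        ring
      -- e = 1 - m < k, using one point of F
      obtain ⟨hA0, hAx, hB0, hBx, hD0, hx1⟩ := pt p₀ hp₀
      have hP₀ : 0 ≤ 1 - (p₀.1 * w₁ + p₀.2 * w₂) := aux_P hD0 hw
      have hid₀ := hidp p₀
      have hek : 1 - m < k := by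
        by_cases hx : Real.sqrt (1 - p₀.1 ^ 2 - p₀.2 ^ 2) < 1
        · exact aux_ek hm0 hk0 hP₀ hAx hBx hid₀ hx
        · push_neg at hx
          have hxe : Real.sqrt (1 - p₀.1 ^ 2 - p₀.2 ^ 2) = 1 := le_antisymm hx1 hx
          have hD : 1 - p₀.1 ^ 2 - p₀.2 ^ 2 = 1 := by
            have h2 := Real.sq_sqrt hD0
            rw [hxe] at h2
            linarith [h2]
          obtain ⟨hp1, hp2⟩ := aux_sum_sq_zero
            (show p₀.1 ^ 2 + p₀.2 ^ 2 ≤ 0 by linarith)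
          rw [hxe, hp1, hp2] at hAx
          simp at hAx
          linarith
      have hke : 0 < k - (1 - m) := by linarith
      have hkm : k - (1 - m) < k * m := aux_km hk1 hm1
      have hQ : 0 < m ^ 2 + (k - (1 - m)) ^ 2 := by positivity
      set a' := (k - (1 - m)) / Real.sqrt (m ^ 2 + (k - (1 - m)) ^ 2) with ha'def
      have hsqQ : 0 < Real.sqrt (m ^ 2 + (k - (1 - m)) ^ 2) := Real.sqrt_pos.2 hQ
      have ha'0 : 0 < a' := div_pos hke hsqQ
      have ha'2 : a' ^ 2 = (k - (1 - m)) ^ 2 / (m ^ 2 + (k - (1 - m)) ^ 2) := by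
        rw [ha'def, div_pow, Real.sq_sqrt hQ.le]
      have ha'1 : a' < 1 := by
        refine aux_lt_one_of_sq ha'0 ?_
        rw [ha'2, div_lt_one hQ]
        linarith [pow_pos hm0 2]
      have ha'a : a' < a := by
        refine aux_lt_of_sq ha'0.le ha0.le ?_
        rw [ha'2, div_lt_iff₀ hQ]
        exact aux_lt2 h1a2 hk2 hke hkm
      -- the midpoint direction comes from an angle
      set z : ℂ := ⟨w₂, -w₁⟩ with hz
      have hnsq : Complex.normSq z = 1 := by
        rw [hz, Complex.normSq_mk]
        linear_combination hw
      have habs : ‖z‖ = 1 := by rw [Complex.norm_def, hnsq, Real.sqrt_one]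
      have hz0 : z ≠ 0 := by
        intro h
        rw [h] at habs
        simp at habs
      have hcos : Real.cos (Complex.arg z) = w₂ := by
        rw [Complex.cos_arg hz0, habs, div_one]
      have hsin : Real.sin (Complex.arg z) = -w₁ := by
        rw [Complex.sin_arg, habs, div_one]
      have hsub : F ⊆ horoRegion a' (Complex.arg z) := by
        intro p hp
        rw [mem_horoRegion_iff, hsin, hcos, neg_neg]
        obtain ⟨hA0', hAx', hB0', hBx', hD0', hx1'⟩ := pt p hp
        have hP0' : 0 ≤ 1 - (p.1 * w₁ + p.2 * w₂) := aux_P hD0' hw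
        have hkey := horo_key hm0 (Real.sqrt_nonneg _) hx1' hAx' hBx' hk0.le hP0'
          (hidp p) hm1
        rw [Real.sq_sqrt hD0'] at hkey
        have h1a' : 1 - a' ^ 2 = m ^ 2 / (m ^ 2 + (k - (1 - m)) ^ 2) := by
          rw [ha'2]
          field_simp
          ring
        rw [h1a', ha'2, div_mul_eq_mul_div, div_mul_eq_mul_div,
          div_le_div_iff₀ hQ hQ]
        linarith [mul_le_mul_of_nonneg_right hkey hQ.le]
      have := hmin a' (Complex.arg z) ha'0 ha'1 hsub
      linarith
end

section
/- Let 0 < a < 1/√2 and let θ₀, θ₁ ∈ ℝ be such that H(a,θ₀) ≠ H(a,θ₁) and the interiors of H(a,θ₀) and H(a,θ₁) (defined by strict inequality in the defining condition) have a common point. Then there exist a' with 0 < a' < a and θ' ∈ ℝ such that interior(H(a,θ₀)) ∩ interior(H(a,θ₁)) ⊆ interior(H(a',θ')). -/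
set_option maxHeartbeats 800000


/-- The interior of the horocycle region `H(a,θ)`, defined by strict inequality. -/
noncomputable def horoInterior (a θ : ℝ) : Set (ℝ × ℝ) :=
  planeRot θ '' {p | a ^ 2 * p.1 ^ 2 + (p.2 - (1 - a ^ 2)) ^ 2 < a ^ 4}

lemma mem_horoInterior_iff (a θ : ℝ) (p : ℝ × ℝ) :
    p ∈ horoInterior a θ ↔
      (1 - a ^ 2) * (1 - (-p.1 * Real.sin θ + p.2 * Real.cos θ)) ^ 2
        < a ^ 2 * (1 - p.1 ^ 2 - p.2 ^ 2) := by
  have h1 := Real.sin_sq_add_cos_sq θ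
  constructor
  · rintro ⟨q, hq, rfl⟩
    simp only [Set.mem_setOf_eq] at hq
    simp only [planeRot]
    have e1 : 1 - (-(q.1 * Real.cos θ - q.2 * Real.sin θ) * Real.sin θ +
        (q.1 * Real.sin θ + q.2 * Real.cos θ) * Real.cos θ) = 1 - q.2 := by
      linear_combination (-q.2) * h1
    have e2 : 1 - (q.1 * Real.cos θ - q.2 * Real.sin θ) ^ 2 -
        (q.1 * Real.sin θ + q.2 * Real.cos θ) ^ 2 = 1 - q.1 ^ 2 - q.2 ^ 2 := by
      linear_combination (-(q.1 ^ 2) - q.2 ^ 2) * h1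
    rw [e1, e2]
    nlinarith [hq]
  · intro h
    refine ⟨planeRot (-θ) p, ?_, ?_⟩
    · simp only [Set.mem_setOf_eq, planeRot, Real.sin_neg, Real.cos_neg]
      have e : a ^ 2 * (p.1 * Real.cos θ - p.2 * -Real.sin θ) ^ 2 +
          (p.1 * -Real.sin θ + p.2 * Real.cos θ - (1 - a ^ 2)) ^ 2 =
          a ^ 4 + a ^ 2 * (p.1 ^ 2 + p.2 ^ 2 - 1) +
            (1 - a ^ 2) * (1 - (-p.1 * Real.sin θ + p.2 * Real.cos θ)) ^ 2 := by
        linear_combination (a ^ 2 * (p.1 ^ 2 + p.2 ^ 2)) * h1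
      linarith [h, e]
    · simp only [planeRot, Real.sin_neg, Real.cos_neg]
      obtain ⟨x, y⟩ := p
      simp only [Prod.mk.injEq]
      constructor
      · linear_combination x * h1
      · linear_combination y * h1

lemma exists_angle (x y : ℝ) (h : x ^ 2 + y ^ 2 = 1) :
    ∃ φ : ℝ, Real.sin φ = x ∧ Real.cos φ = y := by
  set z : ℂ := ⟨y, x⟩ with hz
  have habs : ‖z‖ = 1 := by
    simp only [Complex.norm_def, Complex.normSq_mk, hz]
    rw [show y * y + x * x = 1 by nlinarith]
    exact Real.sqrt_one
  have hz0 : z ≠ 0 := by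
    intro h0; rw [h0] at habs; simp at habs
  refine ⟨Complex.arg z, ?_, ?_⟩
  · rw [Complex.sin_arg, habs]; simp [hz]
  · rw [Complex.cos_arg hz0, habs]; simp [hz]

/-- Given two distinct horocycles of equal size `a < 1/√2` with common interior points,
there exists a strictly smaller horocycle containing their common interior. -/
theorem smaller_horocycle_encloses_common_interior
    (a : ℝ) (ha0 : 0 < a) (ha : a < 1 / Real.sqrt 2)
    (θ₀ θ₁ : ℝ)
    (hne : horoRegion a θ₀ ≠ horoRegion a θ₁)
    (hint : (horoInterior a θ₀ ∩ horoInterior a θ₁).Nonempty) :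
    ∃ a' θ' : ℝ, 0 < a' ∧ a' < a ∧
      horoInterior a θ₀ ∩ horoInterior a θ₁ ⊆ horoInterior a' θ' := by
  have hpy0 := Real.sin_sq_add_cos_sq θ₀
  have hpy1 := Real.sin_sq_add_cos_sq θ₁
  have haa : a ^ 2 < 1 / 2 := by
    have h2 : (1 / Real.sqrt 2) ^ 2 = 1 / 2 := by
      rw [div_pow, one_pow, Real.sq_sqrt (by norm_num : (0:ℝ) ≤ 2)]
    calc a ^ 2 < (1 / Real.sqrt 2) ^ 2 := by
          exact pow_lt_pow_left₀ ha ha0.le (by norm_num)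
      _ = 1 / 2 := h2
  have hB : (0:ℝ) < 1 - a ^ 2 := by nlinarith
  set r : ℝ := a / Real.sqrt (1 - a ^ 2) with hrdef
  have hsB : (0:ℝ) < Real.sqrt (1 - a ^ 2) := Real.sqrt_pos.mpr hB
  have hr0 : 0 < r := div_pos ha0 hsB
  have hr2 : r ^ 2 * (1 - a ^ 2) = a ^ 2 := by
    rw [hrdef, div_pow, Real.sq_sqrt hB.le]
    field_simp
  clear_value r
  have hr1 : r < 1 := by
    clear * - hr2 haa hr0 hB
    nlinarith [hr2, haa, hr0, hB, sq_nonneg (r - 1)]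
  -- distinct tangency directions
  have hdist : ¬ (Real.sin θ₀ = Real.sin θ₁ ∧ Real.cos θ₀ = Real.cos θ₁) := by
    rintro ⟨h1, h2⟩
    exact hne (by have e : planeRot θ₀ = planeRot θ₁ := (by funext q; simp only [planeRot, h1, h2]); simp only [horoRegion, e])
  set vx : ℝ := -(Real.sin θ₀ + Real.sin θ₁) with hvx
  set vy : ℝ := Real.cos θ₀ + Real.cos θ₁ with hvy
  set c : ℝ := Real.sqrt (vx ^ 2 + vy ^ 2) with hcdef
  have hc2 : c ^ 2 = vx ^ 2 + vy ^ 2 := Real.sq_sqrt (by positivity)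
  have hcnn : 0 ≤ c := Real.sqrt_nonneg _
  clear_value vx vy c
  have hclt : c ^ 2 < 4 := by
    have hpos : 0 < (Real.sin θ₀ - Real.sin θ₁) ^ 2 + (Real.cos θ₀ - Real.cos θ₁) ^ 2 := by
      rcases not_and_or.mp hdist with h | h
      · have h' : Real.sin θ₀ - Real.sin θ₁ ≠ 0 := sub_ne_zero.mpr h
        positivity
      · have h' : Real.cos θ₀ - Real.cos θ₁ ≠ 0 := sub_ne_zero.mpr h
        positivity
    have hc2' : c ^ 2 = (Real.sin θ₀ + Real.sin θ₁) ^ 2 + (Real.cos θ₀ + Real.cos θ₁) ^ 2 := by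
      rw [hc2, hvx, hvy]; ring
    clear * - hc2' hpy0 hpy1 hpos
    nlinarith [hc2', hpy0, hpy1, hpos]
  -- witness point
  obtain ⟨p, hp0, hp1⟩ := hint
  rw [mem_horoInterior_iff] at hp0 hp1
  set F0 : ℝ := 1 - (-p.1 * Real.sin θ₀ + p.2 * Real.cos θ₀) with hF0
  set F1 : ℝ := 1 - (-p.1 * Real.sin θ₁ + p.2 * Real.cos θ₁) with hF1
  set g : ℝ := 1 - p.1 ^ 2 - p.2 ^ 2 with hg
  clear_value F0 F1 g
  have hg0 : 0 < g := by
    have h1 := mul_nonneg hB.le (sq_nonneg F0)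
    clear * - hp0 h1 ha0
    nlinarith [hp0, h1, ha0]
  have hg1 : g ≤ 1 := by
    have := sq_nonneg p.1
    have := sq_nonneg p.2
    simp only [hg]; linarith
  have hsum0 : F0 + F1 = 2 - (p.1 * vx + p.2 * vy) := by
    rw [hF0, hF1, hvx, hvy]; ring
  have hCS : (p.1 * vx + p.2 * vy) ^ 2 ≤ (p.1 ^ 2 + p.2 ^ 2) * c ^ 2 := by
    rw [hc2]
    clear * -
    nlinarith [sq_nonneg (p.1 * vy - p.2 * vx)]
  have hc0 : 0 < c := by
    rcases hcnn.lt_or_eq with h | h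
    · exact h
    · exfalso
      have hcz : c ^ 2 = 0 := by rw [← h]; ring
      have hip : p.1 * vx + p.2 * vy = 0 := by
        clear * - hCS hcz
        nlinarith [hCS, hcz, sq_nonneg (p.1 * vx + p.2 * vy), sq_nonneg p.1, sq_nonneg p.2]
      have hsum2 : F0 + F1 = 2 := by rw [hsum0, hip]; ring
      clear * - hp0 hp1 hsum2 haa hg1 hB
      nlinarith [hp0, hp1, sq_nonneg (F0 - F1), haa, hg1, hB, hsum2]
  have hd0 : 0 < 2 - c := by
    clear * - hclt hc0
    nlinarith [hclt, hc0]
  have hw : 0 < c - (p.1 * vx + p.2 * vy) := by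
    clear * - hCS hg0 hc0 hg
    rw [hg] at hg0
    have h1 : (p.1 * vx + p.2 * vy) ^ 2 < c ^ 2 := by
      nlinarith [hCS, mul_pos hc0 hc0, hg0, mul_pos hg0 (mul_pos hc0 hc0)]
    nlinarith [h1, hc0]
  have hm2 : (F0 + F1) ^ 2 < 4 * r ^ 2 * g := by
    clear * - hp0 hp1 hr2 hB hg0
    nlinarith [hp0, hp1, sq_nonneg (F0 - F1), hr2, hB, hg0]
  have hkr : 2 - c < 2 * r := by
    have hmgt : 2 - c < F0 + F1 := by rw [hsum0]; linarith [hw]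
    clear * - hm2 hg1 hr0 hd0 hmgt hg0
    nlinarith [hm2, hg1, hr0, hd0, hmgt, hg0, sq_nonneg r]
  set k : ℝ := 2 - (2 - c) / r with hkdef
  clear_value k
  have hkrr : k * r = 2 * r - (2 - c) := by
    rw [hkdef]; field_simp
  have hk0 : 0 < k := by
    have h1 : 0 < k * r := by rw [hkrr]; linarith [hkr]
    clear * - h1 hr0
    nlinarith [h1, hr0]
  have hkc : k < c := by
    have h1 : k * r < c * r := by
      rw [hkrr]
      clear * - hd0 hr1
      nlinarith [hd0, hr1]
    exact lt_of_mul_lt_mul_right h1 hr0.le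
  set D : ℝ := a ^ 2 * k ^ 2 + (1 - a ^ 2) * c ^ 2 with hDdef
  clear_value D
  have hD0 : 0 < D := by rw [hDdef]; positivity
  set a' : ℝ := Real.sqrt (a ^ 2 * k ^ 2 / D) with ha'def
  have ha'2 : a' ^ 2 = a ^ 2 * k ^ 2 / D := Real.sq_sqrt (by positivity)
  have ha'0 : 0 < a' := Real.sqrt_pos.mpr (by positivity)
  clear_value a'
  have hsqlt : a' ^ 2 < a ^ 2 := by
    rw [ha'2, div_lt_iff₀ hD0, hDdef]
    clear * - hkc hk0 hB ha0
    have hck : 0 < c ^ 2 - k ^ 2 := by nlinarith [hkc, hk0]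
    nlinarith [mul_pos (mul_pos (mul_pos ha0 ha0) hB) hck]
  have ha'a : a' < a := by
    clear * - ha'0 ha0 hsqlt
    nlinarith [ha'0, ha0, hsqlt]
  have hX0 : 0 < 1 - a' ^ 2 := by
    clear * - hsqlt haa
    nlinarith [hsqlt, haa]
  have h1 : (1 - a' ^ 2) * D = (1 - a ^ 2) * c ^ 2 := by
    rw [ha'2]; field_simp; linear_combination (1 : ℝ) * hDdef
  have hDa' : a' ^ 2 * D = a ^ 2 * k ^ 2 := by
    rw [ha'2]; field_simp
  have hprod : ((1 - a' ^ 2) * (k ^ 2 * r ^ 2) - a' ^ 2 * c ^ 2) * D = 0 := by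
    linear_combination (k ^ 2 * r ^ 2) * h1 - c ^ 2 * hDa' + (k ^ 2 * c ^ 2) * hr2
  have hEqkey : (1 - a' ^ 2) * (k ^ 2 * r ^ 2) = a' ^ 2 * c ^ 2 := by
    have := (mul_eq_zero.mp hprod).resolve_right hD0.ne'
    linarith [this]
  obtain ⟨θ', hs', hc'⟩ := exists_angle (-vx / c) (vy / c) (by
    field_simp
    linarith [hc2])
  refine ⟨a', θ', ha'0, ha'a, ?_⟩
  rintro P ⟨hP0, hP1⟩
  rw [mem_horoInterior_iff] at hP0 hP1 ⊢
  rw [hs', hc']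
  set G : ℝ := 1 - P.1 ^ 2 - P.2 ^ 2 with hG
  set E0 : ℝ := 1 - (-P.1 * Real.sin θ₀ + P.2 * Real.cos θ₀) with hE0
  set E1 : ℝ := 1 - (-P.1 * Real.sin θ₁ + P.2 * Real.cos θ₁) with hE1
  clear_value G E0 E1
  have hG0 : 0 < G := by
    have h1 := mul_nonneg hB.le (sq_nonneg E0)
    clear * - hP0 h1 ha0
    nlinarith [hP0, h1, ha0]
  have hG1 : G ≤ 1 := by
    have := sq_nonneg P.1
    have := sq_nonneg P.2
    simp only [hG]; linarith
  set sg : ℝ := Real.sqrt G with hsgdef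
  have hsg2 : sg ^ 2 = G := Real.sq_sqrt hG0.le
  have hsg0 : 0 < sg := Real.sqrt_pos.mpr hG0
  clear_value sg
  have hsg1 : sg ≤ 1 := by
    rw [hsgdef, show (1:ℝ) = Real.sqrt 1 from Real.sqrt_one.symm]
    exact Real.sqrt_le_sqrt hG1
  set W : ℝ := c - (P.1 * vx + P.2 * vy) with hW
  clear_value W
  have hsumP : E0 + E1 = 2 - (P.1 * vx + P.2 * vy) := by
    rw [hE0, hE1, hvx, hvy]; ring
  have hCSP : (P.1 * vx + P.2 * vy) ^ 2 ≤ (P.1 ^ 2 + P.2 ^ 2) * c ^ 2 := by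
    rw [hc2]
    clear * -
    nlinarith [sq_nonneg (P.1 * vy - P.2 * vx)]
  have hW0 : 0 < W := by
    rw [hW]
    rw [hG] at hG0
    clear * - hCSP hG0 hc0
    have h1 : (P.1 * vx + P.2 * vy) ^ 2 < c ^ 2 := by
      nlinarith [hCSP, mul_pos hc0 hc0, hG0, mul_pos hG0 (mul_pos hc0 hc0)]
    nlinarith [h1, hc0]
  have hM2 : (E0 + E1) ^ 2 < 4 * r ^ 2 * G := by
    clear * - hP0 hP1 hr2 hB hG0
    nlinarith [hP0, hP1, sq_nonneg (E0 - E1), hr2, hB, hG0]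
  have hMlt : E0 + E1 < 2 * r * sg := by
    clear * - hM2 hsg2 hr0 hsg0
    nlinarith [hM2, hsg2, mul_pos (mul_pos (by norm_num : (0:ℝ) < 2) hr0) hsg0]
  have hWlt : W < k * r * sg := by
    have hWeq : W = c - 2 + (E0 + E1) := by rw [hW, hsumP]; ring
    clear * - hMlt hkrr hd0 hsg1 hsg0 hWeq
    nlinarith [hMlt, hkrr, hd0, hsg1, hsg0, hWeq]
  have hW2 : W ^ 2 < k ^ 2 * r ^ 2 * G := by
    clear * - hWlt hW0 hsg2 hk0 hr0 hsg0
    have hG' : k ^ 2 * r ^ 2 * sg ^ 2 = k ^ 2 * r ^ 2 * G := by rw [hsg2]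
    nlinarith [hWlt, hW0, hG', mul_pos (mul_pos hk0 hr0) hsg0]
  have hform : 1 - (-P.1 * (-vx / c) + P.2 * (vy / c)) = W / c := by
    rw [hW]; field_simp
  rw [hform, div_pow, ← mul_div_assoc, div_lt_iff₀ (by positivity : (0:ℝ) < c ^ 2)]
  have hEqG : (1 - a' ^ 2) * (k ^ 2 * r ^ 2) * G = a' ^ 2 * c ^ 2 * G := by
    rw [hEqkey]
  clear * - hW2 hEqG hX0 hG0
  nlinarith [hW2, hEqG, hX0, hG0]
end

section
/- Let a and ω be real numbers with 0 < a < 1/√2, 0 < ω < π/2, and 2a² − a²·cos²ω − sin²ω > 0. Define ℓ = (cos ω − a²·cos ω − a·√(2a² − a²·cos²ω − sin²ω)) / (a²·sin²ω + cos²ω). Then 2a² + ℓ − 1 > 0. -/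
private lemma horo_aux (a c r : ℝ) (ha0 : 0 < a) (ha2 : a ^ 2 < 1 / 2)
    (hc0 : 0 < c) (hc1 : c < 1) (hr0 : 0 ≤ r)
    (hr2 : r ^ 2 = 2 * a ^ 2 - a ^ 2 * c ^ 2 - (1 - c ^ 2)) (hrpos : 0 < r) :
    2 * a ^ 2 + (c - a ^ 2 * c - a * r) / (a ^ 2 * (1 - c ^ 2) + c ^ 2) - 1 > 0 := by
  have h2 : (0:ℝ) < 1 - 2 * a ^ 2 := by linarith
  have h3 : (0:ℝ) < 1 - a ^ 2 := by linarith
  have h4 : (0:ℝ) < 1 - c := by linarith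
  have h1 : 0 < 2 - (1 - 2 * a ^ 2) * (1 + c) := by nlinarith
  have hD : 0 < a ^ 2 * (1 - c ^ 2) + c ^ 2 := by nlinarith
  have hq : 0 < 2 * a ^ 2 - a ^ 2 * c ^ 2 - (1 - c ^ 2) := by
    rw [← hr2]; positivity
  have hbc : (1 - a ^ 2) * c ^ 2 > 1 - 2 * a ^ 2 := by nlinarith
  have hX0 : 0 < (2 * a ^ 2 - 1) * (a ^ 2 * (1 - c ^ 2) + c ^ 2) + (1 - a ^ 2) * c := by
    nlinarith [mul_pos h3 hc0, sq_nonneg c]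
  have hE : ((2 * a ^ 2 - 1) * (a ^ 2 * (1 - c ^ 2) + c ^ 2) + (1 - a ^ 2) * c) ^ 2
      - a ^ 2 * r ^ 2 =
      (1 - 2 * a ^ 2) * (a ^ 2 * (1 - c ^ 2) + c ^ 2) *
        ((1 - a ^ 2) * (1 - c) * (2 - (1 - 2 * a ^ 2) * (1 + c))) := by
    rw [hr2]; ring
  have hEpos : 0 < (1 - 2 * a ^ 2) * (a ^ 2 * (1 - c ^ 2) + c ^ 2) *
      ((1 - a ^ 2) * (1 - c) * (2 - (1 - 2 * a ^ 2) * (1 + c))) := by positivity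
  have hXr : a * r < (2 * a ^ 2 - 1) * (a ^ 2 * (1 - c ^ 2) + c ^ 2) + (1 - a ^ 2) * c := by
    have h : (a * r) ^ 2 <
        ((2 * a ^ 2 - 1) * (a ^ 2 * (1 - c ^ 2) + c ^ 2) + (1 - a ^ 2) * c) ^ 2 := by
      have : (a * r) ^ 2 = a ^ 2 * r ^ 2 := by ring
      linarith
    exact lt_of_pow_lt_pow_left₀ 2 hX0.le h
  have hkey : (1 - 2 * a ^ 2) < (c - a ^ 2 * c - a * r) / (a ^ 2 * (1 - c ^ 2) + c ^ 2) := by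
    rw [lt_div_iff₀ hD]
    nlinarith [hXr]
  linarith

/-- The horocycle through the lower intersection point `L = (0, ℓ)` of two horocycles of
size `a < 1/√2` is strictly smaller: `2a² + ℓ − 1 > 0`. -/
theorem lower_intersection_size_ineq
    (a ω : ℝ) (ha0 : 0 < a) (ha : a < 1 / Real.sqrt 2)
    (hω0 : 0 < ω) (hω : ω < Real.pi / 2)
    (hq : 0 < 2 * a ^ 2 - a ^ 2 * Real.cos ω ^ 2 - Real.sin ω ^ 2) :
    2 * a ^ 2 +
      (Real.cos ω - a ^ 2 * Real.cos ω -
          a * Real.sqrt (2 * a ^ 2 - a ^ 2 * Real.cos ω ^ 2 - Real.sin ω ^ 2)) /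
        (a ^ 2 * Real.sin ω ^ 2 + Real.cos ω ^ 2) - 1 > 0 := by
  have hpi := Real.pi_pos
  have hc0 : 0 < Real.cos ω := Real.cos_pos_of_mem_Ioo ⟨by linarith, hω⟩
  have hc1 : Real.cos ω < 1 := by
    have := Real.cos_lt_cos_of_nonneg_of_le_pi le_rfl (by linarith) hω0
    simpa using this
  have hs2 : Real.sin ω ^ 2 = 1 - Real.cos ω ^ 2 := by
    have := Real.sin_sq_add_cos_sq ω
    linarith
  have ha2 : a ^ 2 < 1 / 2 := by
    have h2 : (0:ℝ) < Real.sqrt 2 := Real.sqrt_pos.mpr (by norm_num)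
    have h22 : Real.sqrt 2 ^ 2 = 2 := Real.sq_sqrt (by norm_num)
    have hlt : a * Real.sqrt 2 < 1 := by
      rw [div_eq_mul_inv, one_mul] at ha
      calc a * Real.sqrt 2 < (Real.sqrt 2)⁻¹ * Real.sqrt 2 :=
            mul_lt_mul_of_pos_right ha h2
        _ = 1 := inv_mul_cancel₀ h2.ne'
    nlinarith [mul_pos ha0 h2]
  have hr0 : 0 ≤ Real.sqrt (2 * a ^ 2 - a ^ 2 * Real.cos ω ^ 2 - Real.sin ω ^ 2) :=
    Real.sqrt_nonneg _
  have hrpos : 0 < Real.sqrt (2 * a ^ 2 - a ^ 2 * Real.cos ω ^ 2 - Real.sin ω ^ 2) :=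
    Real.sqrt_pos.mpr hq
  have hr2 : Real.sqrt (2 * a ^ 2 - a ^ 2 * Real.cos ω ^ 2 - Real.sin ω ^ 2) ^ 2
      = 2 * a ^ 2 - a ^ 2 * Real.cos ω ^ 2 - (1 - Real.cos ω ^ 2) := by
    rw [Real.sq_sqrt hq.le, hs2]
  have := horo_aux a (Real.cos ω)
    (Real.sqrt (2 * a ^ 2 - a ^ 2 * Real.cos ω ^ 2 - Real.sin ω ^ 2))
    ha0 ha2 hc0 hc1 hr0 hr2 hrpos
  rw [show a ^ 2 * Real.sin ω ^ 2 + Real.cos ω ^ 2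
      = a ^ 2 * (1 - Real.cos ω ^ 2) + Real.cos ω ^ 2 from by rw [hs2]]
  exact this
end

section
/- Let a and t be real numbers with 0 < t < 1, a > 0 and a² < 1/2, and suppose q := (t⁴ + 6t² + 1)·a² − 4t² > 0. Then a·(t² + 1)·√q < 2 − 3a² − a²·t⁴ − 2·(2a² − 1)²·t². -/
/-- Inequality (eq:size) from the proof of Lemma 4.1: after the substitution
`ω = 2 arctan t`, the size comparison `2a² + ℓ − 1 > 0` becomes
`a(t²+1)√q < 2 − 3a² − a²t⁴ − 2(2a²−1)²t²` where `q = (t⁴+6t²+1)a² − 4t²`. -/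
theorem size_inequality_algebraic
    (a t : ℝ) (ht0 : 0 < t) (ht1 : t < 1) (ha0 : 0 < a) (ha : a ^ 2 < 1 / 2)
    (hq : 0 < (t ^ 4 + 6 * t ^ 2 + 1) * a ^ 2 - 4 * t ^ 2) :
    a * (t ^ 2 + 1) * Real.sqrt ((t ^ 4 + 6 * t ^ 2 + 1) * a ^ 2 - 4 * t ^ 2) <
      2 - 3 * a ^ 2 - a ^ 2 * t ^ 4 - 2 * (2 * a ^ 2 - 1) ^ 2 * t ^ 2 := by
  have hu : (0:ℝ) < 1 - 2 * a ^ 2 := by linarith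
  have hv : (0:ℝ) < 1 - t ^ 2 := by nlinarith
  set q : ℝ := (t ^ 4 + 6 * t ^ 2 + 1) * a ^ 2 - 4 * t ^ 2 with hqdef
  have hs : Real.sqrt q ^ 2 = q := Real.sq_sqrt hq.le
  have hsn : 0 ≤ Real.sqrt q := Real.sqrt_nonneg q
  have hR : 0 < 2 - 3 * a ^ 2 - a ^ 2 * t ^ 4 - 2 * (2 * a ^ 2 - 1) ^ 2 * t ^ 2 := by
    nlinarith [sq_nonneg t, sq_nonneg (t^2), sq_nonneg (2*a^2-1), sq_nonneg a]
  have h2 : (a * (t ^ 2 + 1) * Real.sqrt q) ^ 2 <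
      (2 - 3 * a ^ 2 - a ^ 2 * t ^ 4 - 2 * (2 * a ^ 2 - 1) ^ 2 * t ^ 2) ^ 2 := by
    have key : a ^ 2 * (t ^ 2 + 1) ^ 2 * q <
        (2 - 3 * a ^ 2 - a ^ 2 * t ^ 4 - 2 * (2 * a ^ 2 - 1) ^ 2 * t ^ 2) ^ 2 := by
      have h1 : (0:ℝ) < t^4 * (1 - 2*a^2)^2 := by positivity
      have h2 : (0:ℝ) < (1 - 2*a^2) * q := by positivity
      have h3 : (0:ℝ) < a^2 * (1 - 2*a^2)^3 := by positivity
      have h4 : (0:ℝ) < t^2 * (1 - 2*a^2) * q := by positivity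
      have h5 : (0:ℝ) < t^2 * (1 - 2*a^2) := by positivity
      have h6 : (0:ℝ) < t^4 * (1 - 2*a^2)^3 := by positivity
      have h7 : (0:ℝ) < t^6 * (1 - 2*a^2)^3 := by positivity
      have h8 : (0:ℝ) < (1 - 2*a^2)^3 * (1 - t^2)^3 := by positivity
      have h9 : (0:ℝ) < a^2 * (1 - 2*a^2)^2 * q := by positivity
      have h10 : (0:ℝ) < t^2 * (1 - 2*a^2)^2 * q := by positivity
      have h11 : (0:ℝ) < t^2 * (1 - 2*a^2)^2 := by positivity
      have h12 : (0:ℝ) < a^2 * t^2 * (1 - 2*a^2)^3 := by positivity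
      have h13 : (0:ℝ) < t^4 * (1 - 2*a^2) := by positivity
      rw [hqdef] at *
      nlinarith [h1, h2, h3, h4, h5, h6, h7, h8, h9, h10, h11, h12, h13]
    calc (a * (t ^ 2 + 1) * Real.sqrt q) ^ 2 = a ^ 2 * (t ^ 2 + 1) ^ 2 * q := by
          rw [mul_pow, mul_pow, hs]
      _ < _ := key
  exact lt_of_pow_lt_pow_left₀ 2 hR.le h2
end

section
/- Let a, t, x, y be real numbers with 0 < a < 1/√2, 0 < t < 1 and x² + y² < 1. Suppose that (4a²t² + t⁴ − 2t² + 1)·y² − 2(t² − 1)(a² − 1)(t² + 2tx + 1)·y + ((t² − 1)²x² − (4t³ + 4t)x − 2(t² + 1)²)·a² + (t² + 2tx + 1)² < 0 and (4a²t² + t⁴ − 2t² + 1)·y² − 2(t² − 1)(a² − 1)(t² − 2tx + 1)·y + ((t² − 1)²x² + (4t³ + 4t)x − 2(t² + 1)²)·a² + (t² − 2tx + 1)² < 0. Then a·(t² + 1)·(x² + 2y − 2)·√q + ((2 − x² − 2y)·a² + 2x² + 2y² − 2)·t⁴ + 4·(a² − 1/2)·(x² + 2y² − 2y)·t² + (x²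 + 2y − 2)·a² + 2·(y − 1)² < 0, where q = (t⁴ + 6t² + 1)·a² − 4t². -/
set_option maxHeartbeats 1000000


/-- Inequalities (eq:int0b), (eq:int1b) imply (eq:int2b) in the proof of part 2 of
Lemma 4.1: if `(x,y)` lies in the common interior of the two horocycles of size `a`
(in the algebraic form obtained by the substitution `ω = 2 arctan t`), then it lies in
the interior of the smaller horocycle through their lower intersection point. -/
theorem common_interior_in_smaller_horocycle_algebraic
    (a t x y : ℝ) (ha0 : 0 < a) (ha : a < 1 / Real.sqrt 2)
    (ht0 : 0 < t) (ht1 : t < 1) (hxy : x ^ 2 + y ^ 2 < 1)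
    (h0 : (4 * a ^ 2 * t ^ 2 + t ^ 4 - 2 * t ^ 2 + 1) * y ^ 2 -
        2 * (t ^ 2 - 1) * (a ^ 2 - 1) * (t ^ 2 + 2 * t * x + 1) * y +
        ((t ^ 2 - 1) ^ 2 * x ^ 2 - (4 * t ^ 3 + 4 * t) * x - 2 * (t ^ 2 + 1) ^ 2) * a ^ 2 +
        (t ^ 2 + 2 * t * x + 1) ^ 2 < 0)
    (h1 : (4 * a ^ 2 * t ^ 2 + t ^ 4 - 2 * t ^ 2 + 1) * y ^ 2 -
        2 * (t ^ 2 - 1) * (a ^ 2 - 1) * (t ^ 2 - 2 * t * x + 1) * y +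
        ((t ^ 2 - 1) ^ 2 * x ^ 2 + (4 * t ^ 3 + 4 * t) * x - 2 * (t ^ 2 + 1) ^ 2) * a ^ 2 +
        (t ^ 2 - 2 * t * x + 1) ^ 2 < 0) :
    a * (t ^ 2 + 1) * (x ^ 2 + 2 * y - 2) *
        Real.sqrt ((t ^ 4 + 6 * t ^ 2 + 1) * a ^ 2 - 4 * t ^ 2) +
      ((2 - x ^ 2 - 2 * y) * a ^ 2 + 2 * x ^ 2 + 2 * y ^ 2 - 2) * t ^ 4 +
      4 * (a ^ 2 - 1 / 2) * (x ^ 2 + 2 * y ^ 2 - 2 * y) * t ^ 2 +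
      (x ^ 2 + 2 * y - 2) * a ^ 2 + 2 * (y - 1) ^ 2 < 0 := by
  have h2pos : (0:ℝ) < Real.sqrt 2 := Real.sqrt_pos.mpr (by norm_num)
  have h2sq : Real.sqrt 2 ^ 2 = 2 := Real.sq_sqrt (by norm_num)
  have haa : a * Real.sqrt 2 < 1 := by
    calc a * Real.sqrt 2 < 1 / Real.sqrt 2 * Real.sqrt 2 :=
          mul_lt_mul_of_pos_right ha h2pos
      _ = 1 := one_div_mul_cancel (ne_of_gt h2pos)
  have h2sq' : a^2*Real.sqrt 2^2 = 2*a^2 := by linear_combination a^2*h2sq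
  have hprod : (0:ℝ) < a*Real.sqrt 2*(1 - a*Real.sqrt 2) :=
    mul_pos (mul_pos ha0 h2pos) (by linarith)
  have ha2 : a^2 < 1/2 := by linarith [hprod, h2sq', haa]
  have ha1 : a < 1 := by
    by_contra hc
    push_neg at hc
    linarith [ha2, mul_le_mul hc hc (by norm_num : (0:ℝ) ≤ 1) (by linarith : (0:ℝ) ≤ a)]
  have ht2 : t^2 < 1 := by
    linarith [mul_lt_mul_of_pos_left ht1 ht0, ht1, ht0]
  have hy1 : y < 1 := by
    by_contra hc
    push_neg at hc
    linarith [hxy, sq_nonneg x, mul_le_mul hc hc (by norm_num : (0:ℝ) ≤ 1) (by linarith : (0:ℝ) ≤ y)]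
  have hal : (0:ℝ) < ((t^2-1)^2+4*a^2*t^2) := by
    linarith [sq_nonneg (t^2-1), mul_pos (mul_pos ha0 ha0) (mul_pos ht0 ht0)]
  have hP : ((t^2-1)^2+4*a^2*t^2)*y^2 + (-2*(t^2-1)*(a^2-1)*(t^2+1))*y + ((t^2+1)^2*(1-2*a^2)) < 0 := by
    linarith [h0, h1, mul_nonneg (by positivity : (0:ℝ) ≤ ((t^2-1)^2*a^2+4*t^2)) (sq_nonneg x)]
  have hPneg : (0:ℝ) < -(((t^2-1)^2+4*a^2*t^2)*y^2 + (-2*(t^2-1)*(a^2-1)*(t^2+1))*y + ((t^2+1)^2*(1-2*a^2))) := by linarith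
  have hdisc : (0:ℝ) < (-2*(t^2-1)*(a^2-1)*(t^2+1))^2 - 4*((t^2-1)^2+4*a^2*t^2)*((t^2+1)^2*(1-2*a^2)) := by
    linarith [mul_pos hal hPneg, sq_nonneg (2*((t^2-1)^2+4*a^2*t^2)*y+(-2*(t^2-1)*(a^2-1)*(t^2+1)))]
  have haq : (0:ℝ) < a^2*((t^4+6*t^2+1)*a^2-4*t^2) := by
    by_contra hc
    push_neg at hc
    linarith [hdisc, mul_nonneg (sq_nonneg (t^2+1)) (neg_nonneg.mpr hc)]
  have hq : (0:ℝ) < ((t^4+6*t^2+1)*a^2-4*t^2) := by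
    by_contra hc
    push_neg at hc
    linarith [haq, mul_nonneg (sq_nonneg a) (neg_nonneg.mpr hc)]
  set r := Real.sqrt ((t ^ 4 + 6 * t ^ 2 + 1) * a ^ 2 - 4 * t ^ 2) with hrdef
  have hq' : (0:ℝ) < (t ^ 4 + 6 * t ^ 2 + 1) * a ^ 2 - 4 * t ^ 2 := by linarith [hq]
  have hr2 : r^2 = ((t^4+6*t^2+1)*a^2-4*t^2) := by
    rw [hrdef, Real.sq_sqrt hq'.le]
  have hr0 : (0:ℝ) < r := by
    rw [hrdef]
    exact Real.sqrt_pos.mpr hq'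
  have ht2p : (0:ℝ) < t^2+1 := by positivity
  have hm0 : (0:ℝ) < ((t^2+1)*a*r) := mul_pos (mul_pos ht2p ha0) hr0
  have hD0 : (0:ℝ) < (2*(t^2+1)*a*r) := by linarith [hm0]
  have hD2 : (2*(t^2+1)*a*r)^2 = 4*(t^2+1)^2*a^2*((t^4+6*t^2+1)*a^2-4*t^2) := by
    linear_combination (4*(t^2+1)^2*a^2) * hr2
  have hm2 : ((t^2+1)*a*r)^2 = (t^2+1)^2*a^2*((t^4+6*t^2+1)*a^2-4*t^2) := by
    linear_combination ((t^2+1)^2*a^2) * hr2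
  have hsq : (2*((t^2-1)^2+4*a^2*t^2)*y+(-2*(t^2-1)*(a^2-1)*(t^2+1)))^2 < (2*(t^2+1)*a*r)^2 := by
    linarith [hD2, mul_pos hal hPneg]
  have hYgt : -(2*(t^2+1)*a*r) < 2*((t^2-1)^2+4*a^2*t^2)*y+(-2*(t^2-1)*(a^2-1)*(t^2+1)) := by
    by_contra hc
    push_neg at hc
    linarith [hsq,
      mul_nonneg (show (0:ℝ) ≤ -(2*((t^2-1)^2+4*a^2*t^2)*y+(-2*(t^2-1)*(a^2-1)*(t^2+1)))-(2*(t^2+1)*a*r) by linarith) hD0.le,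
      mul_nonneg (show (0:ℝ) ≤ -(2*((t^2-1)^2+4*a^2*t^2)*y+(-2*(t^2-1)*(a^2-1)*(t^2+1)))-(2*(t^2+1)*a*r) by linarith)
        (show (0:ℝ) ≤ -(2*((t^2-1)^2+4*a^2*t^2)*y+(-2*(t^2-1)*(a^2-1)*(t^2+1)))-(2*(t^2+1)*a*r) by linarith)]
  have hz1 : (0:ℝ) < 2*((t^2-1)^2+4*a^2*t^2)+(-2*(t^2-1)*(a^2-1)*(t^2+1))+(2*(t^2+1)*a*r) := by
    linarith [hYgt, mul_pos hal (show (0:ℝ) < 1 - y by linarith)]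
  have hP1 : (0:ℝ) < ((t^2-1)^2+4*a^2*t^2)+(-2*(t^2-1)*(a^2-1)*(t^2+1))+((t^2+1)^2*(1-2*a^2)) := by
    linarith [mul_pos (mul_pos (mul_pos ht0 ht0) (mul_pos ht0 ht0))
      (show (0:ℝ) < 1-a^2 by linarith [ha2])]
  have hDlt : (2*(t^2+1)*a*r) < 2*((t^2-1)^2+4*a^2*t^2)+(-2*(t^2-1)*(a^2-1)*(t^2+1)) := by
    by_contra hc
    push_neg at hc
    linarith [hD2, mul_pos hal hP1, mul_nonneg (sub_nonneg.mpr hc) hz1.le]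
  have hKb : (0:ℝ) ≤ ((t^2-1)^2*a^2+4*t^2) - (a^2*(1+4*t^2-t^4)+2*t^4-2*t^2) := by
    linarith [mul_nonneg (mul_nonneg (mul_pos ht0 ht0).le
      (show (0:ℝ) ≤ 3 - t^2 by linarith [ht2])) (show (0:ℝ) ≤ 1 - a^2 by linarith [ha2])]
  have hW : (0:ℝ) ≤ ((t^2-1)^2*a^2+4*t^2)*(2*((t^2-1)^2+4*a^2*t^2)+(-2*(t^2-1)*(a^2-1)*(t^2+1))) - 2*(t^2+1)^2*a^2*((t^4+6*t^2+1)*a^2-4*t^2) := by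
    linarith [mul_pos (mul_pos ht0 ht0) hq,
      mul_nonneg (mul_nonneg (mul_nonneg (sq_nonneg a) (mul_pos ht0 ht0).le)
        (show (0:ℝ) ≤ 1/2 - a^2 by linarith [ha2])) (show (0:ℝ) ≤ 3+11*t^2+t^4+t^6 by positivity),
      mul_nonneg (mul_nonneg (mul_nonneg (sq_nonneg a) (mul_pos ht0 ht0).le)
        (show (0:ℝ) ≤ 1 - t^2 by linarith [ht2])) (show (0:ℝ) ≤ 1/2+4*t^2-t^4/2 by linarith [mul_nonneg (mul_pos ht0 ht0).le (show (0:ℝ) ≤ 1 - t^2 by linarith [ht2]), mul_pos ht0 ht0]),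
      mul_pos (mul_pos (mul_pos ht0 ht0) (mul_pos ht0 ht0)) (mul_pos ht0 ht0)]
  have hE1 : (((a^2*(1+4*t^2-t^4)+2*t^4-2*t^2)+((t^2+1)*a*r))*(2*(t^2+1)*a*r) - ((t^2-1)^2*a^2+4*t^2)*(2*((t^2-1)^2+4*a^2*t^2)+(-2*(t^2-1)*(a^2-1)*(t^2+1))+(2*(t^2+1)*a*r))) ≤ 0 := by
    linarith [hW, hm2, mul_nonneg hKb hm0.le]
  have key : 4*((t^2-1)^2+4*a^2*t^2)*(2*(t^2+1)*a*r)*(a*(t^2+1)*(x^2+2*y-2)*r + ((2-x^2-2*y)*a^2+2*x^2+2*y^2-2)*t^4 + 4*(a^2-1/2)*(x^2+2*y^2-2*y)*t^2 + (x^2+2*y-2)*a^2 + 2*(y-1)^2) = 2*((t^2-1)^2+4*a^2*t^2)*(2*((t^2-1)^2+4*a^2*t^2)+(-2*(t^2-1)*(a^2-1)*(t^2+1))+(2*(t^2+1)*a*r))*((4*a^2*t^2+t^4-2*t^2+1)*y^2 - 2*(t^2-1)*(a^2-1)*(t^2+2*t*x+1)*y + ((t^2-1)^2*x^2-(4*t^3+4*t)*x-2*(t^2+1)^2)*a^2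 + (t^2+2*t*x+1)^2 + (4*a^2*t^2+t^4-2*t^2+1)*y^2 - 2*(t^2-1)*(a^2-1)*(t^2-2*t*x+1)*y + ((t^2-1)^2*x^2+(4*t^3+4*t)*x-2*(t^2+1)^2)*a^2 + (t^2-2*t*x+1)^2) + 4*((t^2-1)^2+4*a^2*t^2)*x^2*(((a^2*(1+4*t^2-t^4)+2*t^4-2*t^2)+((t^2+1)*a*r))*(2*(t^2+1)*a*r) - ((t^2-1)^2*a^2+4*t^2)*(2*((t^2-1)^2+4*a^2*t^2)+(-2*(t^2-1)*(a^2-1)*(t^2+1))+(2*(t^2+1)*a*r))) + ((2*(t^2+1)*a*r)-(2*((t^2-1)^2+4*a^2*t^2)+(-2*(t^2-1)*(a^2-1)*(t^2+1))))*(2*((t^2-1)^2+4*a^2*t^2)*y+(-2*(t^2-1)*(a^2-1)*(t^2+1))+(2*(t^2+1)*a*r))^2 := by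
    linear_combination ((16*a^2*t^2+16*a^2*t^4-16*a^2*t^6-16*a^2*t^8-8*a^4-48*a^4*t^2-64*a^4*t^4-16*a^4*t^6+8*a^4*t^8) + (-8*a^3-24*a^3*t^2-24*a^3*t^4-8*a^3*t^6)*r) * hr2
  have ht1 : 2*((t^2-1)^2+4*a^2*t^2)*(2*((t^2-1)^2+4*a^2*t^2)+(-2*(t^2-1)*(a^2-1)*(t^2+1))+(2*(t^2+1)*a*r))*((4*a^2*t^2+t^4-2*t^2+1)*y^2 - 2*(t^2-1)*(a^2-1)*(t^2+2*t*x+1)*y + ((t^2-1)^2*x^2-(4*t^3+4*t)*x-2*(t^2+1)^2)*a^2 + (t^2+2*t*x+1)^2 + (4*a^2*t^2+t^4-2*t^2+1)*y^2 - 2*(t^2-1)*(a^2-1)*(t^2-2*t*x+1)*y + ((t^2-1)^2*x^2+(4*t^3+4*t)*x-2*(t^2+1)^2)*a^2 + (t^2-2*t*x+1)^2) < 0 := by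
    apply mul_neg_of_pos_of_neg
    · linarith [mul_pos hal hz1]
    · linarith
  have ht2' : 4*((t^2-1)^2+4*a^2*t^2)*x^2*(((a^2*(1+4*t^2-t^4)+2*t^4-2*t^2)+((t^2+1)*a*r))*(2*(t^2+1)*a*r) - ((t^2-1)^2*a^2+4*t^2)*(2*((t^2-1)^2+4*a^2*t^2)+(-2*(t^2-1)*(a^2-1)*(t^2+1))+(2*(t^2+1)*a*r))) ≤ 0 := by
    apply mul_nonpos_of_nonneg_of_nonpos
    · positivity
    · exact hE1
  have ht3 : ((2*(t^2+1)*a*r)-(2*((t^2-1)^2+4*a^2*t^2)+(-2*(t^2-1)*(a^2-1)*(t^2+1))))*(2*((t^2-1)^2+4*a^2*t^2)*y+(-2*(t^2-1)*(a^2-1)*(t^2+1))+(2*(t^2+1)*a*r))^2 ≤ 0 := by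
    apply mul_nonpos_of_nonpos_of_nonneg
    · linarith
    · positivity
  have hADpos : (0:ℝ) < 4*((t^2-1)^2+4*a^2*t^2)*(2*(t^2+1)*a*r) := by linarith [mul_pos hal hD0]
  have hGneg : (a*(t^2+1)*(x^2+2*y-2)*r + ((2-x^2-2*y)*a^2+2*x^2+2*y^2-2)*t^4 + 4*(a^2-1/2)*(x^2+2*y^2-2*y)*t^2 + (x^2+2*y-2)*a^2 + 2*(y-1)^2) < 0 := by
    by_contra hc
    push_neg at hc
    linarith [key, ht1, ht2', ht3, mul_nonneg hADpos.le hc]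
  linarith [hGneg]
end

section
/- Let a, t, x, y be real numbers with 0 < a < 1/√2, 0 < t < 1 and x² + y² < 1. Suppose that (4a²t² + t⁴ − 2t² + 1)·y² − 2(t² − 1)(a² − 1)(t² + 2tx + 1)·y + ((t² − 1)²x² − (4t³ + 4t)x − 2(t² + 1)²)·a² + (t² + 2tx + 1)² < 0 and (4a²t² + t⁴ − 2t² + 1)·y² − 2(t² − 1)(a² − 1)(t² − 2tx + 1)·y + ((t² − 1)²x² + (4t³ + 4t)x − 2(t² + 1)²)·a² + (t² − 2tx + 1)² < 0. Then k > 0, where k = (x² + y² − 1)·((x² + 2y − 2)·a² − x² − y² + 1)·t⁴ − 4·(x² + y² − 1)·(y − 1)²·(a² − 1/2)·t² − (y − 1)²·(y² + (2a² − 2)·y + 1 + (x² − 2)·a²). -/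
set_option maxHeartbeats 1000000


/-- The quantifier-elimination claim at the end of the proof of Lemma 4.1: the algebraic
interior conditions (eq:int0b), (eq:int1b) imply positivity of the polynomial `k` from
(eq:int2c). -/
theorem quantifier_elimination_claim
    (a t x y : ℝ) (ha0 : 0 < a) (ha : a < 1 / Real.sqrt 2)
    (ht0 : 0 < t) (ht1 : t < 1) (hxy : x ^ 2 + y ^ 2 < 1)
    (h0 : (4 * a ^ 2 * t ^ 2 + t ^ 4 - 2 * t ^ 2 + 1) * y ^ 2 -
        2 * (t ^ 2 - 1) * (a ^ 2 - 1) * (t ^ 2 + 2 * t * x + 1) * y +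
        ((t ^ 2 - 1) ^ 2 * x ^ 2 - (4 * t ^ 3 + 4 * t) * x - 2 * (t ^ 2 + 1) ^ 2) * a ^ 2 +
        (t ^ 2 + 2 * t * x + 1) ^ 2 < 0)
    (h1 : (4 * a ^ 2 * t ^ 2 + t ^ 4 - 2 * t ^ 2 + 1) * y ^ 2 -
        2 * (t ^ 2 - 1) * (a ^ 2 - 1) * (t ^ 2 - 2 * t * x + 1) * y +
        ((t ^ 2 - 1) ^ 2 * x ^ 2 + (4 * t ^ 3 + 4 * t) * x - 2 * (t ^ 2 + 1) ^ 2) * a ^ 2 +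
        (t ^ 2 - 2 * t * x + 1) ^ 2 < 0) :
    0 < (x ^ 2 + y ^ 2 - 1) * ((x ^ 2 + 2 * y - 2) * a ^ 2 - x ^ 2 - y ^ 2 + 1) * t ^ 4 -
      4 * (x ^ 2 + y ^ 2 - 1) * (y - 1) ^ 2 * (a ^ 2 - 1 / 2) * t ^ 2 -
      (y - 1) ^ 2 * (y ^ 2 + (2 * a ^ 2 - 2) * y + 1 + (x ^ 2 - 2) * a ^ 2) := by
  have hs0 : (0:ℝ) < Real.sqrt 2 := Real.sqrt_pos.mpr (by norm_num)
  have hs2 : Real.sqrt 2 ^ 2 = 2 := Real.sq_sqrt (by norm_num)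
  have ha' : a * Real.sqrt 2 < 1 := by
    have := (lt_div_iff₀ hs0).mp ha
    linarith
  have ha2 : a ^ 2 < 1 / 2 := by nlinarith [ha', ha0, hs0, hs2]
  have hc : (0:ℝ) < 1 - a ^ 2 := by nlinarith
  have hP : (0:ℝ) < 1 - y := by nlinarith [sq_nonneg (y - 1), sq_nonneg x]
  have hQ : (0:ℝ) < 1 + y := by nlinarith [sq_nonneg (y + 1), sq_nonneg x]
  have hρ : (0:ℝ) < 1 - x ^ 2 - y ^ 2 := by linarith
  have hn : (0:ℝ) < (1 + t ^ 2) ^ 2 := by positivity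
  -- key consequence of the hypotheses (choosing the binding one by sign of x)
  have hK : (1 - a ^ 2) * ((1 - y) + t ^ 2 * (1 + y)) ^ 2 <
      a ^ 2 * ((1 - x ^ 2 - y ^ 2) * (1 + t ^ 2) ^ 2) := by
    rcases le_or_gt 0 x with hx | hx
    · have m1 : 0 ≤ (1 - a ^ 2) * (t * x) * (1 - y) :=
        mul_nonneg (mul_nonneg hc.le (mul_nonneg ht0.le hx)) hP.le
      have m2 : 0 ≤ (1 - a ^ 2) * (t * x) * (t ^ 2 * (1 + y)) :=
        mul_nonneg (mul_nonneg hc.le (mul_nonneg ht0.le hx))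
          (mul_nonneg (sq_nonneg t) hQ.le)
      have m3 : 0 ≤ (1 - a ^ 2) * (t * x) ^ 2 := mul_nonneg hc.le (sq_nonneg (t * x))
      linarith [h0, m1, m2, m3]
    · have hx' : 0 ≤ -x := by linarith
      have m1 : 0 ≤ (1 - a ^ 2) * (t * -x) * (1 - y) :=
        mul_nonneg (mul_nonneg hc.le (mul_nonneg ht0.le hx')) hP.le
      have m2 : 0 ≤ (1 - a ^ 2) * (t * -x) * (t ^ 2 * (1 + y)) :=
        mul_nonneg (mul_nonneg hc.le (mul_nonneg ht0.le hx'))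
          (mul_nonneg (sq_nonneg t) hQ.le)
      have m3 : 0 ≤ (1 - a ^ 2) * (t * x) ^ 2 := mul_nonneg hc.le (sq_nonneg (t * x))
      linarith [h1, m1, m2, m3]
  have t1 : 0 < (a ^ 2 * ((1 - x ^ 2 - y ^ 2) * (1 + t ^ 2) ^ 2) -
      (1 - a ^ 2) * ((1 - y) + t ^ 2 * (1 + y)) ^ 2) * (1 + t ^ 2) ^ 2 :=
    mul_pos (sub_pos.mpr hK) hn
  have t1' : 0 < (1 - y) ^ 2 * ((a ^ 2 * ((1 - x ^ 2 - y ^ 2) * (1 + t ^ 2) ^ 2) -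
      (1 - a ^ 2) * ((1 - y) + t ^ 2 * (1 + y)) ^ 2) * (1 + t ^ 2) ^ 2) :=
    mul_pos (pow_pos hP 2) t1
  have t2 : 0 ≤ (1 - a ^ 2) * (1 + t ^ 2) ^ 2 * (x ^ 2 * t ^ 2) *
      (2 * (1 - y) ^ 2 + t ^ 2 * ((1 - y) * (1 + y) + (1 - x ^ 2 - y ^ 2))) := by
    have hlast : 0 ≤ 2 * (1 - y) ^ 2 + t ^ 2 * ((1 - y) * (1 + y) + (1 - x ^ 2 - y ^ 2)) := by
      have := mul_nonneg (sq_nonneg t)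
        (by nlinarith [mul_pos hP hQ, hρ] : (0:ℝ) ≤ (1 - y) * (1 + y) + (1 - x ^ 2 - y ^ 2))
      nlinarith [sq_nonneg (1 - y)]
    exact mul_nonneg (mul_nonneg (mul_nonneg hc.le hn.le)
      (mul_nonneg (sq_nonneg x) (sq_nonneg t))) hlast
  have key : ((x ^ 2 + y ^ 2 - 1) * ((x ^ 2 + 2 * y - 2) * a ^ 2 - x ^ 2 - y ^ 2 + 1) * t ^ 4 -
      4 * (x ^ 2 + y ^ 2 - 1) * (y - 1) ^ 2 * (a ^ 2 - 1 / 2) * t ^ 2 -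
      (y - 1) ^ 2 * (y ^ 2 + (2 * a ^ 2 - 2) * y + 1 + (x ^ 2 - 2) * a ^ 2)) * (1 + t ^ 2) ^ 2 =
      (1 - y) ^ 2 * ((a ^ 2 * ((1 - x ^ 2 - y ^ 2) * (1 + t ^ 2) ^ 2) -
        (1 - a ^ 2) * ((1 - y) + t ^ 2 * (1 + y)) ^ 2) * (1 + t ^ 2) ^ 2) +
      (1 - a ^ 2) * (1 + t ^ 2) ^ 2 * (x ^ 2 * t ^ 2) *
        (2 * (1 - y) ^ 2 + t ^ 2 * ((1 - y) * (1 + y) + (1 - x ^ 2 - y ^ 2))) := by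
    ring
  have hk2 : 0 < ((x ^ 2 + y ^ 2 - 1) * ((x ^ 2 + 2 * y - 2) * a ^ 2 - x ^ 2 - y ^ 2 + 1) * t ^ 4 -
      4 * (x ^ 2 + y ^ 2 - 1) * (y - 1) ^ 2 * (a ^ 2 - 1 / 2) * t ^ 2 -
      (y - 1) ^ 2 * (y ^ 2 + (2 * a ^ 2 - 2) * y + 1 + (x ^ 2 - 2) * a ^ 2)) * (1 + t ^ 2) ^ 2 := by
    rw [key]; linarith
  have hfin := div_pos hk2 hn
  rwa [mul_div_assoc, div_self hn.ne', mul_one] at hfin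
end

section
/- Let a, ω, x, y be real numbers with 0 < a < 1/√2, 0 < ω < π/2 and x² + y² < 1. Suppose that 1 − 2a² + (a²x² + y²)·cos²ω + (a²y² + x²)·sin²ω − 2y·(1 − a²)·(x·sin ω + 1)·cos ω + 2x·(1 − a²)·sin ω < 0 and 1 − 2a² + (a²x² + y²)·cos²ω + (a²y² + x²)·sin²ω + 2y·(1 − a²)·(x·sin ω − 1)·cos ω − 2x·(1 − a²)·sin ω < 0. Then (x² + 2y − 2)·(a·√(2a² − a²·cos²ω − sin²ω) + (a² − 1)·cos ω) + (x² + 2y² − 2y)·(1 + (a² − 1)·sin²ω) < 0. -/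
private lemma aux_neg_lt (u v : ℝ) (h : u ^ 2 < v ^ 2) (hv : 0 < v) : -v < u := by
  nlinarith

private lemma aux_pos_of_mul (p q : ℝ) (hp : 0 < p) (h : 0 < p * q) : 0 < q := by
  by_contra hn
  push_neg at hn
  nlinarith

private lemma aux_nonneg_of_mul (A B C : ℝ) (h : A * B = C) (hA : 0 < A) (hC : 0 ≤ C) :
    0 ≤ B := by
  by_contra hn
  push_neg at hn
  nlinarith


set_option maxHeartbeats 1000000 in
/-- Inequalities (eq:int0), (eq:int1) imply (eq:int2) in the proof of part 2 of
Lemma 4.1: a point `(x,y)` of the open unit disk lying in the interiors of the two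
horocycles of size `a` rotated by angles `±ω` also lies in the interior of the horocycle
tangent to the unit circle at `(0,1)` through the lower intersection point. -/
theorem common_interior_in_smaller_horocycle
    (a ω x y : ℝ) (ha0 : 0 < a) (ha : a < 1 / Real.sqrt 2)
    (hω0 : 0 < ω) (hω : ω < Real.pi / 2) (hxy : x ^ 2 + y ^ 2 < 1)
    (h0 : 1 - 2 * a ^ 2 + (a ^ 2 * x ^ 2 + y ^ 2) * Real.cos ω ^ 2 +
        (a ^ 2 * y ^ 2 + x ^ 2) * Real.sin ω ^ 2 -
        2 * y * (1 - a ^ 2) * (x * Real.sin ω + 1) * Real.cos ω +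
        2 * x * (1 - a ^ 2) * Real.sin ω < 0)
    (h1 : 1 - 2 * a ^ 2 + (a ^ 2 * x ^ 2 + y ^ 2) * Real.cos ω ^ 2 +
        (a ^ 2 * y ^ 2 + x ^ 2) * Real.sin ω ^ 2 +
        2 * y * (1 - a ^ 2) * (x * Real.sin ω - 1) * Real.cos ω -
        2 * x * (1 - a ^ 2) * Real.sin ω < 0) :
    (x ^ 2 + 2 * y - 2) *
        (a * Real.sqrt (2 * a ^ 2 - a ^ 2 * Real.cos ω ^ 2 - Real.sin ω ^ 2) +
          (a ^ 2 - 1) * Real.cos ω) +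
      (x ^ 2 + 2 * y ^ 2 - 2 * y) * (1 + (a ^ 2 - 1) * Real.sin ω ^ 2) < 0 := by
  set s := Real.sin ω with hsdef
  set c := Real.cos ω with hcdef
  have hs : 0 < s := Real.sin_pos_of_pos_of_lt_pi hω0 (by linarith [Real.pi_pos])
  have hc : 0 < c := Real.cos_pos_of_mem_Ioo ⟨by linarith [Real.pi_pos], hω⟩
  have hsc : s ^ 2 + c ^ 2 = 1 := Real.sin_sq_add_cos_sq ω
  have h2 : (0:ℝ) < Real.sqrt 2 := Real.sqrt_pos.2 (by norm_num)
  have hsq2 : Real.sqrt 2 ^ 2 = 2 := Real.sq_sqrt (by norm_num)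
  have h1' : a * Real.sqrt 2 < 1 := by
    have := (lt_div_iff₀ h2).mp ha; linarith
  have ha2 : 2 * a ^ 2 < 1 := by nlinarith [mul_pos ha0 h2]
  have hk : 0 < 1 - a ^ 2 := by linarith
  have hm : 0 < 1 - (1 - a ^ 2) * s ^ 2 := by linarith [mul_pos hc hc, sq_nonneg (a * s), hsc]
  -- average of the two hypotheses
  have hE : a ^ 2 * x ^ 2 * c ^ 2 + a ^ 2 * y ^ 2 * s ^ 2 + x ^ 2 * s ^ 2 +
      (y * c - (1 - a ^ 2)) ^ 2 - a ^ 4 < 0 := by linarith [h0, h1]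
  have hE' : (y * c - (1 - a ^ 2)) ^ 2 + a ^ 2 * y ^ 2 * s ^ 2 < a ^ 4 := by
    linarith [hE, sq_nonneg (x * s), sq_nonneg (a * x * c)]
  have h5 : 0 < (1 - (1 - a ^ 2) * s ^ 2) *
      (a ^ 4 - ((y * c - (1 - a ^ 2)) ^ 2 + a ^ 2 * y ^ 2 * s ^ 2)) :=
    mul_pos hm (by linarith)
  have e1 : a ^ 2 * (a ^ 2 - (1 - a ^ 2) * s ^ 2) =
      (1 - (1 - a ^ 2) * s ^ 2) *
        (a ^ 4 - ((y * c - (1 - a ^ 2)) ^ 2 + a ^ 2 * y ^ 2 * s ^ 2)) +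
      (y * (1 - (1 - a ^ 2) * s ^ 2) - (1 - a ^ 2) * c) ^ 2 := by
    linear_combination ((-1) + y^2 + (-1)*s^2*y^2 + 2*a^2 + a^2*s^2*y^2 + (-1)*a^4) * hsc
  have haD : 0 < a ^ 2 * (a ^ 2 - (1 - a ^ 2) * s ^ 2) := by
    rw [e1]
    have := sq_nonneg (y * (1 - (1 - a ^ 2) * s ^ 2) - (1 - a ^ 2) * c)
    linarith
  have hD : 0 < a ^ 2 - (1 - a ^ 2) * s ^ 2 :=
    aux_pos_of_mul _ _ (by positivity) haD
  have hDarg : 2 * a ^ 2 - a ^ 2 * c ^ 2 - s ^ 2 = a ^ 2 - (1 - a ^ 2) * s ^ 2 := by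
    linear_combination (-(a ^ 2) + 1) * hsc - hsc
  rw [hDarg]
  set r := Real.sqrt (a ^ 2 - (1 - a ^ 2) * s ^ 2) with hrdef
  have hr2 : r ^ 2 = a ^ 2 - (1 - a ^ 2) * s ^ 2 := Real.sq_sqrt hD.le
  have hr0 : 0 < r := Real.sqrt_pos.2 hD
  have hrle : r ≤ a := by
    have hle : a ^ 2 - (1 - a ^ 2) * s ^ 2 ≤ a ^ 2 := by
      have := mul_nonneg hk.le (sq_nonneg s); linarith
    calc r ≤ Real.sqrt (a ^ 2) := Real.sqrt_le_sqrt hle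
      _ = a := Real.sqrt_sq ha0.le
  have hr2' : (a * r) ^ 2 = a ^ 2 * (a ^ 2 - (1 - a ^ 2) * s ^ 2) := by
    rw [mul_pow, hr2]
  have hymkc : (y * (1 - (1 - a ^ 2) * s ^ 2) - (1 - a ^ 2) * c) ^ 2 < (a * r) ^ 2 := by
    linarith [h5, e1, hr2']
  have hy1 : y < 1 := by linarith [hxy, sq_nonneg x, sq_nonneg (y - 1)]
  have hlow : -(a * r) < y * (1 - (1 - a ^ 2) * s ^ 2) - (1 - a ^ 2) * c :=
    aux_neg_lt _ _ hymkc (mul_pos ha0 hr0)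
  have hA : 0 < 1 - (1 - a ^ 2) * s ^ 2 - (1 - a ^ 2) * c + a * r := by
    have h9 := mul_pos hm (by linarith : (0:ℝ) < 1 - y)
    linarith [hlow, h9]
  have hAAp : (1 - (1 - a ^ 2) * s ^ 2 - (1 - a ^ 2) * c + a * r) *
      (1 - (1 - a ^ 2) * s ^ 2 - (1 - a ^ 2) * c - a * r) =
      (1 - a ^ 2) * (1 - (1 - a ^ 2) * s ^ 2) * (1 - c) ^ 2 := by
    linear_combination (s^2 + (-1)*a^2 + (-2)*a^2*s^2 + a^4 + a^4*s^2) * hsc +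
      (-(a^2)) * hr2
  have hA' : 0 ≤ 1 - (1 - a ^ 2) * s ^ 2 - (1 - a ^ 2) * c - a * r :=
    aux_nonneg_of_mul _ _ _ hAAp hA
      (mul_nonneg (mul_nonneg hk.le hm.le) (sq_nonneg (1 - c)))
  have hc2 : (1 - a ^ 2) * c ^ 2 = (1 - a ^ 2) - (1 - a ^ 2) * s ^ 2 := by
    linear_combination (1 - a ^ 2) * hsc
  have har : a * r ≤ a ^ 2 := by
    have h10 := mul_le_mul_of_nonneg_left hrle ha0.le; linarith [h10]
  have h1kc : a * r ≤ 1 - (1 - a ^ 2) * c ^ 2 := by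
    have := mul_nonneg hk.le (sq_nonneg s); linarith
  have KEY : a * r * (1 - (1 - a ^ 2) * s ^ 2) *
      (2 * (1 - y) * (y * (1 - (1 - a ^ 2) * s ^ 2) - (1 - a ^ 2) * c + a * r) -
        x ^ 2 * (1 - (1 - a ^ 2) * s ^ 2 - (1 - a ^ 2) * c + a * r)) =
      (1 - (1 - a ^ 2) * s ^ 2 - (1 - a ^ 2) * c + a * r) * (1 - (1 - a ^ 2) * s ^ 2) *
        (-(a ^ 2 * x ^ 2 * c ^ 2 + a ^ 2 * y ^ 2 * s ^ 2 + x ^ 2 * s ^ 2 +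
            (y * c - (1 - a ^ 2)) ^ 2 - a ^ 4)) +
      (1 - (1 - a ^ 2) * s ^ 2 - (1 - a ^ 2) * c + a * r) *
        (1 - (1 - a ^ 2) * c ^ 2 - a * r) * (1 - (1 - a ^ 2) * s ^ 2) * x ^ 2 +
      (1 - (1 - a ^ 2) * s ^ 2 - (1 - a ^ 2) * c - a * r) *
        (y * (1 - (1 - a ^ 2) * s ^ 2) - (1 - a ^ 2) * c + a * r) ^ 2 := by
    linear_combination
      ((-1) + y^2 + x^2 + c + (-1)*c*y^2 + (-1)*c*x^2 + s^2 + (-2)*s^2*y^2 + (-2)*s^2*x^2 +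
        s^2*c*y^2 + s^2*c*x^2 + s^4*y^2 + s^4*x^2 + (-1)*a*r + a*y^2*r + a*x^2*r +
        (-1)*a*s^2*y^2*r + (-1)*a*s^2*x^2*r + 2*a^2 + (-3)*a^2*c + a^2*c*y^2 + a^2*c*x^2 +
        (-3)*a^2*s^2 + 2*a^2*s^2*y^2 + 2*a^2*s^2*x^2 + (-2)*a^2*s^2*c*y^2 +
        (-2)*a^2*s^2*c*x^2 + (-2)*a^2*s^4*y^2 + (-2)*a^2*s^4*x^2 + 2*a^3*r +
        a^3*s^2*y^2*r + a^3*s^2*x^2*r + (-1)*a^4 + 3*a^4*c + 3*a^4*s^2 + a^4*s^2*c*y^2 +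
        a^4*s^2*c*x^2 + a^4*s^4*y^2 + a^4*s^4*x^2 + (-1)*a^5*r + (-1)*a^6*c +
        (-1)*a^6*s^2) * hsc +
      (a^2 + (-1)*a^2*c + (-1)*a^2*s^2 + a^3*r + a^4*c + a^4*s^2) * hr2
  have t1 : 0 < (1 - (1 - a ^ 2) * s ^ 2 - (1 - a ^ 2) * c + a * r) *
      (1 - (1 - a ^ 2) * s ^ 2) *
      (-(a ^ 2 * x ^ 2 * c ^ 2 + a ^ 2 * y ^ 2 * s ^ 2 + x ^ 2 * s ^ 2 +
          (y * c - (1 - a ^ 2)) ^ 2 - a ^ 4)) :=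
    mul_pos (mul_pos hA hm) (by linarith)
  have t2 : 0 ≤ (1 - (1 - a ^ 2) * s ^ 2 - (1 - a ^ 2) * c + a * r) *
      (1 - (1 - a ^ 2) * c ^ 2 - a * r) * (1 - (1 - a ^ 2) * s ^ 2) * x ^ 2 :=
    mul_nonneg (mul_nonneg (mul_nonneg hA.le (by linarith)) hm.le) (sq_nonneg x)
  have t3 : 0 ≤ (1 - (1 - a ^ 2) * s ^ 2 - (1 - a ^ 2) * c - a * r) *
      (y * (1 - (1 - a ^ 2) * s ^ 2) - (1 - a ^ 2) * c + a * r) ^ 2 :=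
    mul_nonneg hA' (sq_nonneg _)
  have h7 : 0 < a * r * (1 - (1 - a ^ 2) * s ^ 2) *
      (2 * (1 - y) * (y * (1 - (1 - a ^ 2) * s ^ 2) - (1 - a ^ 2) * c + a * r) -
        x ^ 2 * (1 - (1 - a ^ 2) * s ^ 2 - (1 - a ^ 2) * c + a * r)) := by
    rw [KEY]; linarith [t1, t2, t3]
  have h8 : 0 < 2 * (1 - y) * (y * (1 - (1 - a ^ 2) * s ^ 2) - (1 - a ^ 2) * c + a * r) -
      x ^ 2 * (1 - (1 - a ^ 2) * s ^ 2 - (1 - a ^ 2) * c + a * r) :=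
    aux_pos_of_mul _ _ (by positivity) h7
  linarith [h8]
end

section
/- Let a₁, b₁, c₂ be real numbers with a₁ ≠ b₁ and c₂ ≠ 0, and let E(λ) = λ³ − (a₁ + b₁)·λ² + (−a₁² + a₁b₁ − b₁² − 2c₂²)·λ + a₁·(a₁² + c₂²) + b₁·(b₁² + c₂²). Then E(a₁)·E(b₁) = −(b₁² + c₂²)·(a₁ − b₁)²·(a₁² + c₂²), and in particular E(a₁)·E(b₁) < 0. -/
/-- For the cubic `E` arising in the proof of Theorem 3.1, one has
`E(a₁)·E(b₁) = −(b₁² + c₂²)(a₁ − b₁)²(a₁² + c₂²) < 0`. -/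
theorem cubic_sign_change
    (a₁ b₁ c₂ : ℝ) (hab : a₁ ≠ b₁) (hc : c₂ ≠ 0)
    (E : ℝ → ℝ)
    (hE : ∀ l : ℝ, E l = l ^ 3 - (a₁ + b₁) * l ^ 2 +
      (-a₁ ^ 2 + a₁ * b₁ - b₁ ^ 2 - 2 * c₂ ^ 2) * l +
      a₁ * (a₁ ^ 2 + c₂ ^ 2) + b₁ * (b₁ ^ 2 + c₂ ^ 2)) :
    E a₁ * E b₁ = -(b₁ ^ 2 + c₂ ^ 2) * (a₁ - b₁) ^ 2 * (a₁ ^ 2 + c₂ ^ 2) ∧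
      E a₁ * E b₁ < 0 := by
  have h : E a₁ * E b₁ = -(b₁ ^ 2 + c₂ ^ 2) * (a₁ - b₁) ^ 2 * (a₁ ^ 2 + c₂ ^ 2) := by
    rw [hE a₁, hE b₁]; ring
  refine ⟨h, h ▸ ?_⟩
  have h1 : 0 < b₁ ^ 2 + c₂ ^ 2 := by positivity
  have h2 : 0 < (a₁ - b₁) ^ 2 := by
    have := sub_ne_zero.mpr hab; positivity
  have h3 : 0 < a₁ ^ 2 + c₂ ^ 2 := by positivity
  nlinarith [mul_pos (mul_pos h1 h2) h3]
end

section
/- Let a₁, b₁, c₂ be real numbers with a₁ < b₁ and c₂ ≠ 0, and let E(λ) = λ³ − (a₁ + b₁)·λ² + (−a₁² + a₁b₁ − b₁² − 2c₂²)·λ + a₁·(a₁² + c₂²) + b₁·(b₁² + c₂²). Then there exists λ with a₁ < λ < b₁ and E(λ) = 0. -/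
/-- The cubic `E` from the proof of Theorem 3.1 has a root strictly between `a₁` and
`b₁`; this root is the tangency abscissa of the exparabola touching side `AB` between
`A` and `B`. -/
theorem cubic_root_between
    (a₁ b₁ c₂ : ℝ) (hab : a₁ < b₁) (hc : c₂ ≠ 0)
    (E : ℝ → ℝ)
    (hE : ∀ l : ℝ, E l = l ^ 3 - (a₁ + b₁) * l ^ 2 +
      (-a₁ ^ 2 + a₁ * b₁ - b₁ ^ 2 - 2 * c₂ ^ 2) * l +
      a₁ * (a₁ ^ 2 + c₂ ^ 2) + b₁ * (b₁ ^ 2 + c₂ ^ 2)) :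
    ∃ l : ℝ, a₁ < l ∧ l < b₁ ∧ E l = 0 := by
  have hcont : ContinuousOn E (Set.Icc a₁ b₁) := by
    have : Continuous E := by
      have : E = fun l => l ^ 3 - (a₁ + b₁) * l ^ 2 +
        (-a₁ ^ 2 + a₁ * b₁ - b₁ ^ 2 - 2 * c₂ ^ 2) * l +
        a₁ * (a₁ ^ 2 + c₂ ^ 2) + b₁ * (b₁ ^ 2 + c₂ ^ 2) := funext hE
      rw [this]; continuity
    exact this.continuousOn
  have hc2 : 0 < c₂ ^ 2 := by positivity
  have hEa : 0 < E a₁ := by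
    rw [hE a₁]
    nlinarith [sq_nonneg b₁, sq_nonneg (b₁ - a₁)]
  have hEb : E b₁ < 0 := by
    rw [hE b₁]
    nlinarith [sq_nonneg a₁]
  have h := intermediate_value_Ioo' hab.le hcont
  have : (0 : ℝ) ∈ E '' Set.Ioo a₁ b₁ := h ⟨hEb, hEa⟩
  obtain ⟨l, ⟨h1, h2⟩, h3⟩ := this
  exact ⟨l, h1, h2, h3⟩
end

section
/- Let a₁, b₁, c₂ be real numbers with a₁ < b₁ and c₂ ≠ 0, and let E(λ) = λ³ − (a₁ + b₁)·λ² + (−a₁² + a₁b₁ − b₁² − 2c₂²)·λ + a₁·(a₁² + c₂²) + b₁·(b₁² + c₂²). Then E has three distinct real roots, and exactly one of them lies in the open interval (a₁, b₁). -/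
open Polynomial Filter

private lemma cubic_aux_monic (p2 p1 p0 : ℝ) :
    (X ^ 3 + C p2 * X ^ 2 + C p1 * X + C p0 : ℝ[X]).Monic := by monicity!

private lemma cubic_aux_deg (p2 p1 p0 : ℝ) :
    (X ^ 3 + C p2 * X ^ 2 + C p1 * X + C p0 : ℝ[X]).natDegree = 3 := by compute_degree!

/-- The cubic `E` from the proof of Theorem 3.1 has three distinct real roots, exactly
one of which lies in the open interval `(a₁, b₁)`: this is the algebraic content of the
existence of precisely three exparabolas of a triangle. -/
theorem cubic_three_roots
    (a₁ b₁ c₂ : ℝ) (hab : a₁ < b₁) (hc : c₂ ≠ 0)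
    (E : ℝ → ℝ)
    (hE : ∀ l : ℝ, E l = l ^ 3 - (a₁ + b₁) * l ^ 2 +
      (-a₁ ^ 2 + a₁ * b₁ - b₁ ^ 2 - 2 * c₂ ^ 2) * l +
      a₁ * (a₁ ^ 2 + c₂ ^ 2) + b₁ * (b₁ ^ 2 + c₂ ^ 2)) :
    (∃ r₁ r₂ r₃ : ℝ, r₁ ≠ r₂ ∧ r₁ ≠ r₃ ∧ r₂ ≠ r₃ ∧
      E r₁ = 0 ∧ E r₂ = 0 ∧ E r₃ = 0) ∧
    (∃! l : ℝ, a₁ < l ∧ l < b₁ ∧ E l = 0) := by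
  -- key sign values
  have hEa : E a₁ = (b₁ - a₁) * (b₁ ^ 2 + c₂ ^ 2) := by rw [hE]; ring
  have hEb : E b₁ = -((b₁ - a₁) * (a₁ ^ 2 + c₂ ^ 2)) := by rw [hE]; ring
  have hEapos : 0 < E a₁ := by
    rw [hEa]; exact mul_pos (by linarith) (by positivity)
  have hEbneg : E b₁ < 0 := by
    rw [hEb]
    have : 0 < (b₁ - a₁) * (a₁ ^ 2 + c₂ ^ 2) := mul_pos (by linarith) (by positivity)
    linarith
  -- polynomial P with eval = E
  set P : ℝ[X] := X ^ 3 + C (-(a₁ + b₁)) * X ^ 2 +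
      C (-a₁ ^ 2 + a₁ * b₁ - b₁ ^ 2 - 2 * c₂ ^ 2) * X +
      C (a₁ * (a₁ ^ 2 + c₂ ^ 2) + b₁ * (b₁ ^ 2 + c₂ ^ 2)) with hPdef
  have hPE : ∀ l, P.eval l = E l := by
    intro l; rw [hE]; simp [hPdef]; ring
  have hPmonic : P.Monic := cubic_aux_monic _ _ _
  have hPdeg : P.natDegree = 3 := cubic_aux_deg _ _ _
  have hPne : P ≠ 0 := hPmonic.ne_zero
  -- continuity
  have hcont : Continuous E := by
    have : E = fun l => P.eval l := by funext l; rw [hPE]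
    rw [this]; exact P.continuous
  -- behaviour at infinity
  have htop : Tendsto E atTop atTop := by
    have h := P.tendsto_atTop_of_leadingCoeff_nonneg
      (by rw [degree_eq_natDegree hPne, hPdeg]; norm_num)
      (by rw [hPmonic.leadingCoeff]; norm_num)
    simpa [funext hPE] using h
  -- Q for the atBot direction : Q.eval x = -E (-x)
  set Q : ℝ[X] := X ^ 3 + C (a₁ + b₁) * X ^ 2 +
      C (-a₁ ^ 2 + a₁ * b₁ - b₁ ^ 2 - 2 * c₂ ^ 2) * X +
      C (-(a₁ * (a₁ ^ 2 + c₂ ^ 2) + b₁ * (b₁ ^ 2 + c₂ ^ 2))) with hQdef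
  have hQE : ∀ x, Q.eval x = -E (-x) := by
    intro x; rw [hE]; simp [hQdef]; ring
  have hQmonic : Q.Monic := cubic_aux_monic _ _ _
  have hQdeg : Q.natDegree = 3 := cubic_aux_deg _ _ _
  have hQtop : Tendsto (fun x => Q.eval x) atTop atTop :=
    Q.tendsto_atTop_of_leadingCoeff_nonneg
      (by rw [degree_eq_natDegree hQmonic.ne_zero, hQdeg]; norm_num)
      (by rw [hQmonic.leadingCoeff]; norm_num)
  -- get m < a₁ with E m < 0
  obtain ⟨x, hx0, hxa⟩ := ((hQtop.eventually (eventually_gt_atTop 0)).and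
    (eventually_gt_atTop (-a₁))).exists
  have hmlt : -x < a₁ := by linarith
  have hEm : E (-x) < 0 := by have := hQE x; linarith
  -- get M > b₁ with E M > 0
  obtain ⟨M, hM0, hMb⟩ := ((htop.eventually (eventually_gt_atTop 0)).and
    (eventually_gt_atTop b₁)).exists
  -- IVT roots
  obtain ⟨r₁, ⟨_, hr1a⟩, hr1z⟩ :=
    intermediate_value_Icc (le_of_lt hmlt) hcont.continuousOn
      (Set.mem_Icc.mpr ⟨le_of_lt hEm, le_of_lt hEapos⟩)
  obtain ⟨r₂, ⟨hr2a, hr2b⟩, hr2z⟩ :=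
    intermediate_value_Icc' (le_of_lt hab) hcont.continuousOn
      (Set.mem_Icc.mpr ⟨le_of_lt hEbneg, le_of_lt hEapos⟩)
  obtain ⟨r₃, ⟨hr3b, _⟩, hr3z⟩ :=
    intermediate_value_Icc (le_of_lt hMb) hcont.continuousOn
      (Set.mem_Icc.mpr ⟨le_of_lt hEbneg, le_of_lt hM0⟩)
  have hr1a' : r₁ < a₁ := lt_of_le_of_ne hr1a (by rintro rfl; exact absurd hr1z (ne_of_gt hEapos))
  have hr2a' : a₁ < r₂ := lt_of_le_of_ne hr2a (by rintro rfl; linarith)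
  have hr2b' : r₂ < b₁ := lt_of_le_of_ne hr2b (by rintro rfl; exact absurd hr2z (ne_of_lt hEbneg))
  have hr3b' : b₁ < r₃ := lt_of_le_of_ne hr3b (by rintro rfl; linarith)
  -- at most one root in (a₁, b₁): any 4 distinct roots contradict degree 3
  have key : ∀ s t : ℝ, a₁ < s → s < b₁ → E s = 0 → a₁ < t → t < b₁ → E t = 0 → s = t := by
    intro s t hsa hsb hsz hta htb htz
    by_contra hst
    have hmem : ∀ u : ℝ, E u = 0 → u ∈ P.roots.toFinset := by
      intro u hu
      rw [Multiset.mem_toFinset, mem_roots hPne]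
      exact (hPE u).trans hu
    have hsub : ({r₁, s, t, r₃} : Finset ℝ) ⊆ P.roots.toFinset := by
      intro u hu
      simp only [Finset.mem_insert, Finset.mem_singleton] at hu
      rcases hu with rfl | rfl | rfl | rfl
      · exact hmem _ hr1z
      · exact hmem _ hsz
      · exact hmem _ htz
      · exact hmem _ hr3z
    have d1 : r₁ ≠ s := by intro h; subst h; linarith
    have d2 : r₁ ≠ t := by intro h; subst h; linarith
    have d3 : r₁ ≠ r₃ := by intro h; subst h; linarith
    have d4 : s ≠ r₃ := by intro h; subst h; linarith
    have d5 : t ≠ r₃ := by intro h; subst h; linarith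
    have hcard : ({r₁, s, t, r₃} : Finset ℝ).card = 4 := by
      rw [Finset.card_insert_of_notMem (by simp [d1, d2, d3]),
        Finset.card_insert_of_notMem (by simp [hst, d4]),
        Finset.card_insert_of_notMem (by simp [d5]),
        Finset.card_singleton]
    have h4 : 4 ≤ P.roots.toFinset.card := hcard ▸ Finset.card_le_card hsub
    have h3 : P.roots.toFinset.card ≤ 3 := by
      calc P.roots.toFinset.card ≤ Multiset.card P.roots := P.roots.toFinset_card_le
        _ ≤ P.natDegree := P.card_roots'
        _ = 3 := hPdeg
    omega
  constructor
  · exact ⟨r₁, r₂, r₃, by intro h; subst h; linarith, by intro h; subst h; linarith,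
      by intro h; subst h; linarith, hr1z, hr2z, hr3z⟩
  · exact ⟨r₂, ⟨hr2a', hr2b', hr2z⟩, fun l ⟨h1, h2, h3⟩ => key l r₂ h1 h2 h3 hr2a' hr2b' hr2z⟩
end

section
/- Let F ⊆ ℝ² be a nonempty compact set contained in the open unit disk {(x,y) : x² + y² < 1}. Then the set A = {a ∈ ℝ : 0 < a < 1 and there exists θ ∈ ℝ with F ⊆ H(a,θ)} is nonempty and has a least element; i.e., F can be enclosed by a horocycle and among all enclosing horocycles there is one of minimal size. -/
noncomputable def horoFun (x : ℝ × ℝ) (p : ℝ × ℝ) : ℝ :=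
  x.1 ^ 2 * (p.1 * Real.cos x.2 + p.2 * Real.sin x.2) ^ 2 +
    (-p.1 * Real.sin x.2 + p.2 * Real.cos x.2 - (1 - x.1 ^ 2)) ^ 2 - x.1 ^ 4

lemma horoFun_cont (p : ℝ × ℝ) : Continuous fun x : ℝ × ℝ => horoFun x p := by
  unfold horoFun; fun_prop

lemma mem_horo {a θ : ℝ} {p : ℝ × ℝ} :
    p ∈ horoRegion a θ ↔ horoFun (a, θ) p ≤ 0 := by
  have hpyth : Real.sin θ ^ 2 + Real.cos θ ^ 2 = 1 := Real.sin_sq_add_cos_sq θ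
  constructor
  · rintro ⟨q, hq, rfl⟩
    simp only [Set.mem_setOf_eq] at hq
    simp only [horoFun, planeRot]
    have h1 : (q.1 * Real.cos θ - q.2 * Real.sin θ) * Real.cos θ +
        (q.1 * Real.sin θ + q.2 * Real.cos θ) * Real.sin θ = q.1 := by
      linear_combination q.1 * hpyth
    have h2 : -(q.1 * Real.cos θ - q.2 * Real.sin θ) * Real.sin θ +
        (q.1 * Real.sin θ + q.2 * Real.cos θ) * Real.cos θ = q.2 := by
      linear_combination q.2 * hpyth
    calc a ^ 2 * ((q.1 * Real.cos θ - q.2 * Real.sin θ) * Real.cos θ +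
          (q.1 * Real.sin θ + q.2 * Real.cos θ) * Real.sin θ) ^ 2 +
        (-(q.1 * Real.cos θ - q.2 * Real.sin θ) * Real.sin θ +
          (q.1 * Real.sin θ + q.2 * Real.cos θ) * Real.cos θ - (1 - a ^ 2)) ^ 2 - a ^ 4
        = a ^ 2 * q.1 ^ 2 + (q.2 - (1 - a ^ 2)) ^ 2 - a ^ 4 := by rw [h1, h2]
      _ ≤ 0 := by linarith
  · intro h
    refine ⟨(p.1 * Real.cos θ + p.2 * Real.sin θ, -p.1 * Real.sin θ + p.2 * Real.cos θ),
      ?_, ?_⟩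
    · simp only [Set.mem_setOf_eq]
      simp only [horoFun] at h
      linarith
    · simp only [planeRot]
      rw [Prod.ext_iff]
      constructor
      · show (p.1 * Real.cos θ + p.2 * Real.sin θ) * Real.cos θ -
            (-p.1 * Real.sin θ + p.2 * Real.cos θ) * Real.sin θ = p.1
        linear_combination p.1 * hpyth
      · show (p.1 * Real.cos θ + p.2 * Real.sin θ) * Real.sin θ +
            (-p.1 * Real.sin θ + p.2 * Real.cos θ) * Real.cos θ = p.2
        linear_combination p.2 * hpyth



/-- Any nonempty compact subset of the open unit disk (the Cayley–Klein model of the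
hyperbolic plane) can be enclosed by a horocycle, and among all enclosing horocycles
there is one of minimal size. -/
theorem minimal_enclosing_horocycle_exists
    (F : Set (ℝ × ℝ)) (hne : F.Nonempty) (hF : IsCompact F)
    (hdisk : F ⊆ {p : ℝ × ℝ | p.1 ^ 2 + p.2 ^ 2 < 1}) :
    ({a : ℝ | 0 < a ∧ a < 1 ∧ ∃ θ : ℝ, F ⊆ horoRegion a θ}).Nonempty ∧
      ∃ a : ℝ, IsLeast {a : ℝ | 0 < a ∧ a < 1 ∧ ∃ θ : ℝ, F ⊆ horoRegion a θ} a := by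
  classical
  -- maximizer of the squared norm on F
  obtain ⟨p₀, hp₀F, hmax⟩ := hF.exists_isMaxOn hne
    ((by fun_prop : Continuous fun p : ℝ × ℝ => p.1 ^ 2 + p.2 ^ 2)).continuousOn
  have hs0 : 0 ≤ p₀.1 ^ 2 + p₀.2 ^ 2 := by positivity
  have hs1 : p₀.1 ^ 2 + p₀.2 ^ 2 < 1 := hdisk hp₀F
  set t : ℝ := Real.sqrt (p₀.1 ^ 2 + p₀.2 ^ 2) with ht_def
  have ht0 : 0 ≤ t := Real.sqrt_nonneg _
  have ht2 : t ^ 2 = p₀.1 ^ 2 + p₀.2 ^ 2 := Real.sq_sqrt hs0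
  have ht1 : t < 1 := by nlinarith
  set a₀ : ℝ := Real.sqrt ((1 + t) / 2) with ha₀_def
  have ha₀2 : a₀ ^ 2 = (1 + t) / 2 := Real.sq_sqrt (by linarith)
  have ha₀pos : 0 < a₀ := Real.sqrt_pos.mpr (by linarith)
  have ha₀lt1 : a₀ < 1 := by nlinarith
  -- F is enclosed by the horocycle of size a₀ at angle 0
  have hcover : F ⊆ horoRegion a₀ 0 := by
    intro p hp
    rw [mem_horo]
    have hps : p.1 ^ 2 + p.2 ^ 2 ≤ t ^ 2 := by rw [ht2]; exact hmax hp
    have hy : |p.2| ≤ t := by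
      rw [← Real.sqrt_sq_eq_abs, ← Real.sqrt_sq ht0]
      exact Real.sqrt_le_sqrt (by nlinarith [sq_nonneg p.1])
    obtain ⟨hy1, hy2⟩ := abs_le.mp hy
    have ha₀4 : a₀ ^ 4 = ((1 + t) / 2) ^ 2 := by
      rw [show a₀ ^ 4 = (a₀ ^ 2) ^ 2 from by ring, ha₀2]
    have f1 : 0 ≤ (1 + t) / 2 * (t ^ 2 - p.1 ^ 2 - p.2 ^ 2) :=
      mul_nonneg (by linarith) (by linarith)
    have f2 : 0 ≤ (1 - t) * ((p.2 + t) * (2 - p.2 + t)) :=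
      mul_nonneg (by linarith) (mul_nonneg (by linarith) (by linarith))
    simp only [horoFun, Real.cos_zero, Real.sin_zero]
    rw [show a₀ ^ 2 * (p.1 * 1 + p.2 * 0) ^ 2 +
        (-p.1 * 0 + p.2 * 1 - (1 - a₀ ^ 2)) ^ 2 - a₀ ^ 4
        = a₀ ^ 2 * p.1 ^ 2 + (p.2 - (1 - a₀ ^ 2)) ^ 2 - a₀ ^ 4 from by ring,
      ha₀2, ha₀4]
    nlinarith [f1, f2]
  -- a positive lower bound for the size of any enclosing horocycle
  set ε : ℝ := Real.sqrt ((1 - t) / 2) with hε_def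
  have hε2 : ε ^ 2 = (1 - t) / 2 := Real.sq_sqrt (by linarith)
  have hεpos : 0 < ε := Real.sqrt_pos.mpr (by linarith)
  have hlow : ∀ b θb : ℝ, 0 < b → F ⊆ horoRegion b θb → ε ≤ b := by
    intro b θb hbpos hsub
    obtain ⟨q, hq, hpq⟩ := hsub hp₀F
    simp only [Set.mem_setOf_eq] at hq
    have hpyth := Real.sin_sq_add_cos_sq θb
    have h1 : p₀.1 = q.1 * Real.cos θb - q.2 * Real.sin θb := by rw [← hpq]; rfl
    have h2 : p₀.2 = q.1 * Real.sin θb + q.2 * Real.cos θb := by rw [← hpq]; rfl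
    have hnorm : q.1 ^ 2 + q.2 ^ 2 = t ^ 2 := by
      rw [ht2, h1, h2]
      linear_combination -(q.1 ^ 2 + q.2 ^ 2) * hpyth
    -- the second coordinate of a point of the ellipse is at least 1 - 2b²
    have hq2 : 1 - 2 * b ^ 2 ≤ q.2 := by
      by_contra hc
      push_neg at hc
      have hA : b ^ 2 < -(q.2 - (1 - b ^ 2)) := by linarith
      have := mul_self_lt_mul_self (sq_nonneg b) hA
      nlinarith [this, sq_nonneg (q.1 * b)]
    have hq2t : q.2 ≤ t := by
      have hqt : q.2 ^ 2 ≤ t ^ 2 := by nlinarith [sq_nonneg q.1]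
      calc q.2 ≤ |q.2| := le_abs_self _
        _ ≤ t := by
            rw [← Real.sqrt_sq_eq_abs, ← Real.sqrt_sq ht0]
            exact Real.sqrt_le_sqrt hqt
    have hb2 : ε ^ 2 ≤ b ^ 2 := by rw [hε2]; linarith
    calc ε = Real.sqrt (ε ^ 2) := (Real.sqrt_sq hεpos.le).symm
      _ ≤ Real.sqrt (b ^ 2) := Real.sqrt_le_sqrt hb2
      _ = b := Real.sqrt_sq hbpos.le
  have hεa₀ : ε ≤ a₀ := hlow a₀ 0 ha₀pos hcover
  -- the compact search space
  set C : Set (ℝ × ℝ) := {x | ∀ p ∈ F, horoFun x p ≤ 0} with hC_def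
  have hCclosed : IsClosed C := by
    have hCeq : C = ⋂ p ∈ F, {x : ℝ × ℝ | horoFun x p ≤ 0} := by
      ext x; simp [hC_def]
    rw [hCeq]
    exact isClosed_biInter fun p _ => isClosed_le (horoFun_cont p) continuous_const
  set S : Set (ℝ × ℝ) := (Set.Icc ε a₀ ×ˢ Set.Icc (0 : ℝ) (2 * Real.pi)) ∩ C with hS_def
  have hScompact : IsCompact S := (isCompact_Icc.prod isCompact_Icc).inter_right hCclosed
  have hSne : S.Nonempty := by
    refine ⟨(a₀, 0), ?_⟩
    simp only [hS_def, Set.mem_inter_iff, Set.mem_prod, Set.mem_Icc, hC_def,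
      Set.mem_setOf_eq]
    exact ⟨⟨⟨hεa₀, le_refl _⟩, ⟨le_refl 0, by positivity⟩⟩,
      fun p hp => mem_horo.mp (hcover hp)⟩
  have hKcompact : IsCompact (Prod.fst '' S) := hScompact.image continuous_fst
  obtain ⟨am, hamK, hamlb⟩ := hKcompact.exists_isLeast (hSne.image _)
  obtain ⟨x, hxS, hx1⟩ := hamK
  obtain ⟨⟨hxI, hθI⟩, hxC⟩ := hxS
  have hamA : am ∈ {a : ℝ | 0 < a ∧ a < 1 ∧ ∃ θ : ℝ, F ⊆ horoRegion a θ} := by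
    refine ⟨by rw [← hx1]; exact lt_of_lt_of_le hεpos hxI.1,
      by rw [← hx1]; exact lt_of_le_of_lt hxI.2 ha₀lt1, x.2, ?_⟩
    intro p hp
    rw [← hx1, mem_horo]
    exact hxC p hp
  refine ⟨⟨a₀, ha₀pos, ha₀lt1, 0, hcover⟩, am, hamA, ?_⟩
  rintro b ⟨hb0, hb1, θb, hsub⟩
  have hεb : ε ≤ b := hlow b θb hb0 hsub
  by_cases hba : b ≤ a₀
  · -- reduce the angle modulo 2π and use minimality over S
    have h2π : (0 : ℝ) < 2 * Real.pi := by positivity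
    set n : ℤ := ⌊θb / (2 * Real.pi)⌋ with hn_def
    set θc : ℝ := θb - n * (2 * Real.pi) with hθc_def
    have hcos : Real.cos θc = Real.cos θb := Real.cos_sub_int_mul_two_pi θb n
    have hsin : Real.sin θc = Real.sin θb := Real.sin_sub_int_mul_two_pi θb n
    have hf1 : (n : ℝ) * (2 * Real.pi) ≤ θb :=
      (le_div_iff₀ h2π).mp (Int.floor_le _)
    have hf2 : θb < ((n : ℝ) + 1) * (2 * Real.pi) :=
      (div_lt_iff₀ h2π).mp (Int.lt_floor_add_one _)
    have hbS : (b, θc) ∈ S := by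
      simp only [hS_def, Set.mem_inter_iff, Set.mem_prod, Set.mem_Icc, hC_def,
        Set.mem_setOf_eq]
      refine ⟨⟨⟨hεb, hba⟩, ⟨by linarith, by linarith⟩⟩, ?_⟩
      intro p hp
      have hmem : horoFun (b, θb) p ≤ 0 := mem_horo.mp (hsub hp)
      have heq : horoFun (b, θc) p = horoFun (b, θb) p := by
        simp only [horoFun]
        rw [hcos, hsin]
      rw [heq]
      exact hmem
    exact hamlb ⟨(b, θc), hbS, rfl⟩
  · push_neg at hba
    have : am ≤ a₀ := by rw [← hx1]; exact hxI.2
    linarith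
end

section
/- For all real a with 0 < a < 1 and all θ ∈ ℝ, the origin (0,0) belongs to the horocycle region H(a,θ) if and only if a ≥ 1/√2. Consequently, for the one-point set F = {(0,0)}, every horocycle H(1/√2, θ), θ ∈ ℝ, is an enclosing horocycle of minimal size, and these are not all equal as subsets of ℝ² (e.g. H(1/√2, 0) ≠ H(1/√2, π)); hence the bound a < 2^(−1/2) in the uniqueness theorem for minimal enclosing horocycles cannot be improved. -/
lemma sqrt2_sq : Real.sqrt 2 ^ 2 = 2 := Real.sq_sqrt (by norm_num)

lemma sqrt2_pos : (0:ℝ) < Real.sqrt 2 := Real.sqrt_pos.2 (by norm_num)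

lemma inv_sqrt2_sq : (1 / Real.sqrt 2) ^ 2 = 1 / 2 := by
  rw [div_pow, sqrt2_sq, one_pow]

lemma origin_mem_iff (a θ : ℝ) :
    ((0:ℝ), (0:ℝ)) ∈ horoRegion a θ ↔ (1 - a ^ 2) ^ 2 ≤ a ^ 4 := by
  constructor
  · rintro ⟨p, hp, heq⟩
    have e1 : p.1 * Real.cos θ - p.2 * Real.sin θ = 0 := congrArg Prod.fst heq
    have e2 : p.1 * Real.sin θ + p.2 * Real.cos θ = 0 := congrArg Prod.snd heq
    have hsc := Real.sin_sq_add_cos_sq θ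
    have hp1 : p.1 = 0 := by nlinarith [sq_nonneg p.1, sq_nonneg p.2]
    have hp2 : p.2 = 0 := by nlinarith [sq_nonneg p.1, sq_nonneg p.2]
    have := hp
    simp only [Set.mem_setOf_eq, hp1, hp2] at this
    nlinarith [this]
  · intro h
    refine ⟨(0, 0), ?_, by simp [planeRot]⟩
    simp only [Set.mem_setOf_eq]
    nlinarith [h]

lemma cond_iff (a : ℝ) (ha : 0 < a) (ha1 : a < 1) :
    (1 - a ^ 2) ^ 2 ≤ a ^ 4 ↔ 1 / Real.sqrt 2 ≤ a := by
  constructor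
  · intro h
    have h2 : 1 / 2 ≤ a ^ 2 := by nlinarith
    rw [div_le_iff₀ sqrt2_pos]
    nlinarith [sqrt2_sq, sqrt2_pos, mul_pos ha sqrt2_pos]
  · intro h
    have h2 : (1 / Real.sqrt 2) ^ 2 ≤ a ^ 2 :=
      pow_le_pow_left₀ (by positivity) h 2
    rw [inv_sqrt2_sq] at h2
    nlinarith

/-- The origin belongs to `H(a,θ)` iff `a ≥ 1/√2`.  Consequently, for `F = {(0,0)}`,
every horocycle `H(1/√2, θ)` is a minimal enclosing horocycle, and these are not all
equal: the bound `a < 2^(−1/2)` in the uniqueness theorem cannot be improved. -/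
theorem minimal_horocycle_bound_sharp :
    (∀ a θ : ℝ, 0 < a → a < 1 →
      (((0 : ℝ), (0 : ℝ)) ∈ horoRegion a θ ↔ 1 / Real.sqrt 2 ≤ a)) ∧
    (∀ θ : ℝ, ((0 : ℝ), (0 : ℝ)) ∈ horoRegion (1 / Real.sqrt 2) θ) ∧
    (∀ a' θ' : ℝ, 0 < a' → a' < 1 → ((0 : ℝ), (0 : ℝ)) ∈ horoRegion a' θ' →
      1 / Real.sqrt 2 ≤ a') ∧
    horoRegion (1 / Real.sqrt 2) 0 ≠ horoRegion (1 / Real.sqrt 2) Real.pi := by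
  have hmain : ∀ a θ : ℝ, 0 < a → a < 1 →
      (((0 : ℝ), (0 : ℝ)) ∈ horoRegion a θ ↔ 1 / Real.sqrt 2 ≤ a) := by
    intro a θ ha ha1
    rw [origin_mem_iff, cond_iff a ha ha1]
  refine ⟨hmain, ?_, ?_, ?_⟩
  · intro θ
    rw [origin_mem_iff]
    have := inv_sqrt2_sq
    nlinarith [this]
  · intro a' θ' ha ha1 hmem
    exact (hmain a' θ' ha ha1).1 hmem
  · intro h
    have ha2 : (1 / Real.sqrt 2) ^ 2 = 1 / 2 := inv_sqrt2_sq
    have hmem : ((0:ℝ), (1:ℝ)) ∈ horoRegion (1 / Real.sqrt 2) 0 := by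
      refine ⟨(0, 1), ?_, by simp [planeRot]⟩
      simp only [Set.mem_setOf_eq]
      nlinarith [ha2]
    rw [h] at hmem
    obtain ⟨p, hp, heq⟩ := hmem
    have e1 : p.1 * Real.cos Real.pi - p.2 * Real.sin Real.pi = 0 :=
      congrArg Prod.fst heq
    have e2 : p.1 * Real.sin Real.pi + p.2 * Real.cos Real.pi = 1 :=
      congrArg Prod.snd heq
    rw [Real.cos_pi, Real.sin_pi] at e1 e2
    have hp1 : p.1 = 0 := by linarith
    have hp2 : p.2 = -1 := by linarith
    simp only [Set.mem_setOf_eq, hp1, hp2] at hp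
    nlinarith [hp, ha2]
end
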